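/- arXiv:math/0508417 — 5 statements merged into one kernel-verified Lean document; each statement's English description precedes it below -/
import Mathlib

section
/- There is an absolute constant c₁₀ > 0 such that the following holds. Let (α_r)_{r=1,...,R} be a finite sequence of real numbers, let (a_n) be a sequence of complex numbers, let N ≥ 1, and let 0 < Δ ≤ 1/2. Let K be a real number such that for every α ∈ ℝ, #{ 1 ≤ r ≤ R : ‖α_r − α‖ ≤ Δ } ≤ K, where ‖x‖ denotes the distance from x to the nearest integer. Then ∑_{r=1}^{R} |S(α_r)|² ≤ c₁₀ · K · (N + Δ^{-1}) · Z. -/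
open Finset intervalIntegral MeasureTheory

/-- The exponential sum `S(α) = ∑_{1 ≤ n ≤ N} a_n e(nα)` with `e(x) = exp(2πix)`. -/
noncomputable def expSum (N : ℝ) (f : ℕ → ℂ) (α : ℝ) : ℂ :=
  ∑ n ∈ Finset.Icc 1 ⌊N⌋₊, f n * Complex.exp (2 * Real.pi * Complex.I * (n : ℂ) * (α : ℂ))

/-- `Z = ∑_{1 ≤ n ≤ N} |a_n|²`. -/
noncomputable def Zsum (N : ℝ) (f : ℕ → ℂ) : ℝ :=
  ∑ n ∈ Finset.Icc 1 ⌊N⌋₊, ‖f n‖ ^ 2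




noncomputable def trigP (s : Finset ℕ) (c : ℕ → ℂ) (x : ℝ) : ℂ :=
  ∑ n ∈ s, c n * Complex.exp (2 * Real.pi * Complex.I * (n : ℂ) * (x : ℂ))

lemma trigP_continuous (s : Finset ℕ) (c : ℕ → ℂ) : Continuous (trigP s c) := by
  unfold trigP
  exact continuous_finset_sum _ fun n _ => continuous_const.mul
    ((Complex.continuous_exp.comp (by continuity)))

lemma trigP_hasDerivAt (s : Finset ℕ) (c : ℕ → ℂ) (x : ℝ) :
    HasDerivAt (trigP s c) (trigP s (fun n => 2 * Real.pi * Complex.I * (n : ℂ) * c n) x) x := by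
  unfold trigP
  apply HasDerivAt.fun_sum
  intro n _
  have h0 : HasDerivAt (fun x : ℝ => (x : ℂ)) 1 x := by
    simpa using (hasDerivAt_id x).ofReal_comp
  have h1 : HasDerivAt (fun y : ℝ => 2 * Real.pi * Complex.I * (n : ℂ) * (y : ℂ))
      (2 * Real.pi * Complex.I * (n : ℂ)) x := by
    simpa using h0.const_mul (2 * Real.pi * Complex.I * (n : ℂ))
  have h2 := (h1.cexp).const_mul (c n)
  convert h2 using 1
  · rfl
  ring

lemma trigP_periodic (s : Finset ℕ) (c : ℕ → ℂ) : Function.Periodic (trigP s c) 1 := by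
  intro x
  unfold trigP
  refine Finset.sum_congr rfl fun n _ => ?_
  have : (2 * Real.pi * Complex.I * (n : ℂ) * ((x : ℂ) + 1))
      = 2 * Real.pi * Complex.I * (n : ℂ) * (x : ℂ) + (n : ℤ) * (2 * Real.pi * Complex.I) := by
    push_cast; ring
  rw [Complex.ofReal_add, Complex.ofReal_one, this, Complex.exp_add,
    Complex.exp_int_mul_two_pi_mul_I, mul_one]

lemma periodic_int_add {g : ℝ → ℝ} (hg : Function.Periodic g 1) (x : ℝ) (k : ℤ) :
    g (x + k) = g x := by
  simpa using (hg.int_mul k) x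


lemma integral_cexp_int (k : ℤ) :
    ∫ x in (0:ℝ)..1, Complex.exp (2 * Real.pi * Complex.I * (k : ℂ) * (x : ℂ))
      = if k = 0 then 1 else 0 := by
  rcases eq_or_ne k 0 with hk | hk
  · simp [hk]
  · rw [if_neg hk]
    have hc : (2 * Real.pi * Complex.I * (k : ℂ)) ≠ 0 := by
      simp [Real.pi_ne_zero, Complex.I_ne_zero, hk]
    set c : ℂ := 2 * Real.pi * Complex.I * (k : ℂ) with hcdef
    have hder : ∀ x ∈ Set.uIcc (0:ℝ) 1,
        HasDerivAt (fun y : ℝ => Complex.exp (c * (y : ℂ)) / c)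
          (Complex.exp (c * (x : ℂ))) x := by
      intro x _
      have h0 : HasDerivAt (fun y : ℝ => (y : ℂ)) 1 x := by
        simpa using (hasDerivAt_id x).ofReal_comp
      have h1 : HasDerivAt (fun y : ℝ => c * (y : ℂ)) c x := by simpa using h0.const_mul c
      have h2 := (h1.cexp).div_const c
      convert h2 using 1
      · rfl
      rw [mul_div_cancel_right₀ _ hc]
    have hint : IntervalIntegrable (fun x : ℝ => Complex.exp (c * (x : ℂ))) volume 0 1 :=
      (Complex.continuous_exp.comp (by continuity)).intervalIntegrable _ _
    have := integral_eq_sub_of_hasDerivAt hder hint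
    rw [this]
    have h1 : Complex.exp (c * ((1:ℝ) : ℂ)) = 1 := by
      rw [hcdef]
      have : (2 * (Real.pi:ℂ) * Complex.I * (k : ℂ) * ((1:ℝ):ℂ)) = (k:ℤ) * (2 * Real.pi * Complex.I) := by
        push_cast; ring
      rw [this, Complex.exp_int_mul_two_pi_mul_I]
    have h0 : Complex.exp (c * ((0:ℝ) : ℂ)) = 1 := by simp
    rw [h1, h0]
    simp

lemma trigP_parseval (s : Finset ℕ) (c : ℕ → ℂ) :
    ∫ x in (0:ℝ)..1, ‖trigP s c x‖^2 = ∑ n ∈ s, ‖c n‖^2 := by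
  have hc : ∀ (n m : ℕ), Continuous (fun x : ℝ => (c n * (starRingEnd ℂ) (c m)) *
      Complex.exp (2 * Real.pi * Complex.I * ((((n:ℤ) - (m:ℤ)) : ℤ) : ℂ) * (x : ℂ))) :=
    fun n m => continuous_const.mul (Complex.continuous_exp.comp (by continuity))
  have expand : ∀ x : ℝ, ((‖trigP s c x‖^2 : ℝ) : ℂ)
      = ∑ n ∈ s, ∑ m ∈ s, (c n * (starRingEnd ℂ) (c m)) *
          Complex.exp (2 * Real.pi * Complex.I * ((((n:ℤ) - (m:ℤ)) : ℤ) : ℂ) * (x : ℂ)) := by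
    intro x
    have h1 : ((‖trigP s c x‖^2 : ℝ) : ℂ) = trigP s c x * (starRingEnd ℂ) (trigP s c x) := by
      rw [Complex.mul_conj']
      norm_cast
    rw [h1]
    unfold trigP
    rw [map_sum, Finset.sum_mul_sum]
    refine Finset.sum_congr rfl fun n _ => Finset.sum_congr rfl fun m _ => ?_
    rw [map_mul, ← Complex.exp_conj]
    have hconj : (starRingEnd ℂ) (2 * Real.pi * Complex.I * (m : ℂ) * (x : ℂ))
        = -(2 * Real.pi * Complex.I * (m : ℂ) * (x : ℂ)) := by
      simp only [map_mul, map_ofNat, Complex.conj_I, Complex.conj_ofReal, map_natCast]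
      ring
    rw [hconj]
    rw [mul_mul_mul_comm, ← Complex.exp_add]
    congr 1
    push_cast
    ring
  have key : ∫ x in (0:ℝ)..1, ((‖trigP s c x‖^2 : ℝ) : ℂ) = ∑ n ∈ s, ((‖c n‖^2 : ℝ) : ℂ) := by
    rw [intervalIntegral.integral_congr (fun x _ => expand x)]
    rw [intervalIntegral.integral_finset_sum (fun n _ =>
      (continuous_finset_sum s fun m _ => hc n m).intervalIntegrable _ _)]
    refine Finset.sum_congr rfl fun n hn => ?_
    rw [intervalIntegral.integral_finset_sum (fun m _ => (hc n m).intervalIntegrable _ _)]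
    have : ∀ m ∈ s, (∫ x in (0:ℝ)..1, (c n * (starRingEnd ℂ) (c m)) *
        Complex.exp (2 * Real.pi * Complex.I * ((((n:ℤ) - (m:ℤ)) : ℤ) : ℂ) * (x : ℂ)))
        = if n = m then (c n * (starRingEnd ℂ) (c m)) else 0 := by
      intro m _
      rw [intervalIntegral.integral_const_mul, integral_cexp_int]
      rcases eq_or_ne n m with h | h
      · simp [h]
      · rw [if_neg (by simpa [sub_eq_zero] using fun hh => h (by exact_mod_cast hh)), if_neg h,
          mul_zero]
    rw [Finset.sum_congr rfl this, Finset.sum_ite_eq s n (fun m => c n * (starRingEnd ℂ) (c m)),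
      if_pos hn, Complex.mul_conj']
    norm_cast
  have := key
  rw [intervalIntegral.integral_ofReal] at this
  exact_mod_cast this


lemma hasDerivAt_normSq_comp {S : ℝ → ℂ} {S' : ℂ} {x : ℝ} (h : HasDerivAt S S' x) :
    HasDerivAt (fun y => ‖S y‖^2) (2 * ((starRingEnd ℂ) (S x) * S').re) x := by
  have hre : HasDerivAt (fun y => (S y).re) S'.re x :=
    Complex.reCLM.hasFDerivAt.comp_hasDerivAt x h
  have him : HasDerivAt (fun y => (S y).im) S'.im x :=
    Complex.imCLM.hasFDerivAt.comp_hasDerivAt x h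
  have hfun : (fun y => ‖S y‖^2) = fun y => (S y).re^2 + (S y).im^2 := by
    funext y
    rw [Complex.sq_norm, Complex.normSq_apply]
    ring
  rw [hfun]
  refine ((hre.fun_pow 2).add (him.fun_pow 2)).congr_deriv ?_
  simp only [Complex.mul_re, Complex.conj_re, Complex.conj_im]
  norm_num
  ring

lemma avg_bound {φ D : ℝ → ℝ} (hd : ∀ x, HasDerivAt φ (D x) x) (hφc : Continuous φ)
    (hDc : Continuous D) {a b c : ℝ} (hab : a ≤ b) (hc : c ∈ Set.Icc a b) :
    (b - a) * φ c ≤ (∫ y in a..b, φ y) + (b - a) * ∫ y in a..b, |D y| := by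
  have habs : ∀ y ∈ Set.Icc a b, φ c ≤ φ y + ∫ t in a..b, |D t| := by
    intro y hy
    have hDint : ∀ u v : ℝ, IntervalIntegrable D volume u v := fun u v =>
      hDc.intervalIntegrable u v
    have hDaint : ∀ u v : ℝ, IntervalIntegrable (fun t => |D t|) volume u v := fun u v =>
      (hDc.abs).intervalIntegrable u v
    rcases le_total y c with hyc | hyc
    · have h1 : ∫ t in y..c, D t = φ c - φ y :=
        integral_eq_sub_of_hasDerivAt (fun t _ => hd t) (hDint y c)
      have h2 : ∫ t in y..c, D t ≤ ∫ t in y..c, |D t| :=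
        intervalIntegral.integral_mono hyc (hDint y c) (hDaint y c) (fun t => le_abs_self _)
      have h3 : ∫ t in y..c, |D t| ≤ ∫ t in a..b, |D t| :=
        intervalIntegral.integral_mono_interval hy.1 hyc hc.2
          (Filter.Eventually.of_forall fun t => abs_nonneg _) (hDaint a b)
      linarith
    · have h1 : ∫ t in c..y, D t = φ y - φ c :=
        integral_eq_sub_of_hasDerivAt (fun t _ => hd t) (hDint c y)
      have h2 : -(∫ t in c..y, D t) ≤ ∫ t in c..y, |D t| := by
        rw [← intervalIntegral.integral_neg]
        exact intervalIntegral.integral_mono hyc (hDint c y).neg (hDaint c y)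
          (fun t => neg_le_abs _)
      have h3 : ∫ t in c..y, |D t| ≤ ∫ t in a..b, |D t| :=
        intervalIntegral.integral_mono_interval hc.1 hyc hy.2
          (Filter.Eventually.of_forall fun t => abs_nonneg _) (hDaint a b)
      linarith
  have hmono : ∫ y in a..b, (fun _ => φ c) y ≤ ∫ y in a..b, (φ y + ∫ t in a..b, |D t|) := by
    apply intervalIntegral.integral_mono_on hab (intervalIntegrable_const)
      ((hφc.intervalIntegrable a b).add intervalIntegrable_const)
    exact habs
  rw [intervalIntegral.integral_const, intervalIntegral.integral_add
    (hφc.intervalIntegrable a b) intervalIntegrable_const,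
    intervalIntegral.integral_const] at hmono
  simp only [smul_eq_mul] at hmono
  linarith


lemma overlap_sum {g : ℝ → ℝ} (hg : Continuous g) (hg0 : ∀ x, 0 ≤ g x)
    (R : ℕ) (β : ℕ → ℝ) (hβ : ∀ r, r ∈ Finset.Icc 1 R → β r ∈ Set.Icc (0:ℝ) 1)
    {δ : ℝ} (hδ : 0 < δ) (hδ4 : δ ≤ 1/2) (K : ℝ)
    (hK : ∀ x : ℝ, (((Finset.Icc 1 R).filter
        (fun r => x ∈ Set.Ioc (β r - δ/2) (β r + δ/2))).card : ℝ) ≤ K) :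
    ∑ r ∈ Finset.Icc 1 R, ∫ x in (β r - δ/2)..(β r + δ/2), g x
      ≤ K * ∫ x in (-(1/2) : ℝ)..(3/2), g x := by
  have hJ : (Set.Ioc (-(1/2) : ℝ) (3/2) : Set ℝ) = Set.Ioc (-(1/2) : ℝ) (3/2) := rfl
  set J : Set ℝ := Set.Ioc (-(1/2) : ℝ) (3/2)
  have hgend : IntegrableOn g J volume := hg.integrableOn_Ioc
  have hsub : ∀ r ∈ Finset.Icc 1 R, Set.Ioc (β r - δ/2) (β r + δ/2) ⊆ J := by
    intro r hr
    have h1 := (hβ r hr).1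
    have h2 := (hβ r hr).2
    exact Set.Ioc_subset_Ioc (by linarith) (by linarith)
  have step1 : ∀ r ∈ Finset.Icc 1 R, ∫ x in (β r - δ/2)..(β r + δ/2), g x
      = ∫ x in J, (Set.Ioc (β r - δ/2) (β r + δ/2)).indicator g x := by
    intro r hr
    rw [intervalIntegral.integral_of_le (by linarith), setIntegral_indicator measurableSet_Ioc,
      Set.inter_eq_self_of_subset_right (hsub r hr)]
  rw [Finset.sum_congr rfl step1, ← MeasureTheory.integral_finset_sum]
  · have hle : ∀ x : ℝ, (∑ r ∈ Finset.Icc 1 R,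
        (Set.Ioc (β r - δ/2) (β r + δ/2)).indicator g x) ≤ K * g x := by
      intro x
      have : (∑ r ∈ Finset.Icc 1 R, (Set.Ioc (β r - δ/2) (β r + δ/2)).indicator g x)
          = (((Finset.Icc 1 R).filter
              (fun r => x ∈ Set.Ioc (β r - δ/2) (β r + δ/2))).card : ℝ) * g x := by
        rw [← Finset.sum_filter_add_sum_filter_not (Finset.Icc 1 R)
          (fun r => x ∈ Set.Ioc (β r - δ/2) (β r + δ/2))]
        have e1 : ∑ r ∈ (Finset.Icc 1 R).filter (fun r => x ∈ Set.Ioc (β r - δ/2) (β r + δ/2)),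
            (Set.Ioc (β r - δ/2) (β r + δ/2)).indicator g x
            = ∑ r ∈ (Finset.Icc 1 R).filter (fun r => x ∈ Set.Ioc (β r - δ/2) (β r + δ/2)),
              g x := by
          refine Finset.sum_congr rfl fun r hr => ?_
          rw [Set.indicator_of_mem (Finset.mem_filter.1 hr).2]
        have e2 : ∑ r ∈ (Finset.Icc 1 R).filter
            (fun r => ¬ x ∈ Set.Ioc (β r - δ/2) (β r + δ/2)),
            (Set.Ioc (β r - δ/2) (β r + δ/2)).indicator g x = 0 := by
          refine Finset.sum_eq_zero fun r hr => ?_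
          rw [Set.indicator_of_notMem (Finset.mem_filter.1 hr).2]
        rw [e1, e2, add_zero, Finset.sum_const, nsmul_eq_mul]
      rw [this]
      exact mul_le_mul_of_nonneg_right (hK x) (hg0 x)
    calc ∫ x in J, (∑ r ∈ Finset.Icc 1 R,
          (Set.Ioc (β r - δ/2) (β r + δ/2)).indicator g x)
        ≤ ∫ x in J, K * g x := by
          apply MeasureTheory.integral_mono
          · exact integrable_finset_sum _ (fun r hr =>
              hgend.indicator measurableSet_Ioc)
          · exact hgend.const_mul K
          · exact hle
      _ = K * ∫ x in J, g x := by rw [MeasureTheory.integral_const_mul]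
      _ = K * ∫ x in (-(1/2) : ℝ)..(3/2), g x := by
          rw [intervalIntegral.integral_of_le (by norm_num)]
  · intro r hr
    exact hgend.indicator measurableSet_Ioc


lemma split_per {g : ℝ → ℝ} (hgc : Continuous g) (hper : Function.Periodic g 1) :
    ∫ x in (-(1/2):ℝ)..(3/2), g x = 2 * ∫ x in (0:ℝ)..1, g x := by
  have h1 := hper.intervalIntegral_add_eq (-(1/2):ℝ) 0
  have h2 := hper.intervalIntegral_add_eq (1/2:ℝ) 0
  norm_num at h1 h2
  rw [← intervalIntegral.integral_add_adjacent_intervals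
    (hgc.intervalIntegrable (-(1/2):ℝ) (1/2)) (hgc.intervalIntegrable (1/2:ℝ) (3/2)),
    h1, h2]
  ring

set_option maxHeartbeats 2000000 in
/-- Lemma 1 (a variant of the large sieve): if every interval of length `2Δ` (mod 1)
contains at most `K` of the points `α_1, …, α_R`, then
`∑_{r ≤ R} |S(α_r)|² ≤ c₁₀ K (N + Δ⁻¹) Z`. Here `‖x‖`, the distance from `x` to the
nearest integer, is realized as `|x - round x|`. -/
theorem stmt_4 :
    ∃ c₁₀ : ℝ, 0 < c₁₀ ∧
      ∀ (R : ℕ) (α : ℕ → ℝ) (f : ℕ → ℂ) (N Δ K : ℝ),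
        1 ≤ N → 0 < Δ → Δ ≤ 1 / 2 →
        (∀ β : ℝ,
          (((Finset.Icc 1 R).filter
              (fun r => |α r - β - round (α r - β)| ≤ Δ)).card : ℝ) ≤ K) →
        ∑ r ∈ Finset.Icc 1 R, ‖expSum N f (α r)‖ ^ 2
          ≤ c₁₀ * K * (N + Δ⁻¹) * Zsum N f := by
  refine ⟨132, by norm_num, ?_⟩
  intro R α f N Δ K hN hΔ hΔ2 hK
  have hN0 : (0:ℝ) < N := lt_of_lt_of_le one_pos hN
  set s : Finset ℕ := Finset.Icc 1 ⌊N⌋₊ with hs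
  set c' : ℕ → ℂ := fun n => 2 * Real.pi * Complex.I * (n : ℂ) * f n with hc'
  set φ : ℝ → ℝ := fun x => ‖trigP s f x‖ ^ 2 with hφ
  set ψ : ℝ → ℝ := fun x => ‖trigP s c' x‖ ^ 2 with hψ
  set D : ℝ → ℝ := fun x => 2 * ((starRingEnd ℂ) (trigP s f x) * trigP s c' x).re with hD
  have hφd : ∀ x, HasDerivAt φ (D x) x := fun x =>
    hasDerivAt_normSq_comp (trigP_hasDerivAt s f x)
  have φc : Continuous φ := ((trigP_continuous s f).norm).pow 2
  have ψc : Continuous ψ := ((trigP_continuous s c').norm).pow 2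
  have Dc : Continuous D := continuous_const.mul (Complex.continuous_re.comp
    (((Complex.continuous_conj.comp (trigP_continuous s f))).mul (trigP_continuous s c')))
  have φ0 : ∀ x, 0 ≤ φ x := fun x => sq_nonneg _
  have ψ0 : ∀ x, 0 ≤ ψ x := fun x => sq_nonneg _
  have hφper : Function.Periodic φ 1 := fun x => by
    simp only [hφ]; rw [trigP_periodic s f x]
  have hψper : Function.Periodic ψ 1 := fun x => by
    simp only [hψ]; rw [trigP_periodic s c' x]
  -- δ
  set δ : ℝ := min Δ N⁻¹ with hδdef
  have hδ0 : 0 < δ := lt_min hΔ (inv_pos.2 hN0)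
  have hδΔ : δ ≤ Δ := min_le_left _ _
  have hδN : δ ≤ N⁻¹ := min_le_right _ _
  have hδ2 : δ ≤ 1/2 := hδΔ.trans hΔ2
  have hδδ : δ * δ⁻¹ = 1 := mul_inv_cancel₀ (ne_of_gt hδ0)
  -- AM-GM bound on |D|
  have habs : ∀ x, |D x| ≤ δ⁻¹ * φ x + δ * ψ x := by
    intro x
    have h1 : |D x| ≤ 2 * (‖trigP s f x‖ * ‖trigP s c' x‖) := by
      calc |D x| = 2 * |((starRingEnd ℂ) (trigP s f x) * trigP s c' x).re| := by
            rw [hD]; rw [abs_mul]; norm_num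
        _ ≤ 2 * ‖(starRingEnd ℂ) (trigP s f x) * trigP s c' x‖ := by
            have := Complex.abs_re_le_norm ((starRingEnd ℂ) (trigP s f x) * trigP s c' x)
            linarith
        _ = 2 * (‖trigP s f x‖ * ‖trigP s c' x‖) := by
            rw [norm_mul, Complex.norm_conj]
    have h2 : δ⁻¹ * φ x + δ * ψ x - 2 * (‖trigP s f x‖ * ‖trigP s c' x‖)
        = δ⁻¹ * (‖trigP s f x‖ - δ * ‖trigP s c' x‖)^2 := by
      rw [hφ, hψ]
      field_simp
      ring
    nlinarith [mul_nonneg (inv_nonneg.2 hδ0.le)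
      (sq_nonneg (‖trigP s f x‖ - δ * ‖trigP s c' x‖))]
  -- local bound at each point
  have key : ∀ r, δ * φ (α r) ≤
      2 * (∫ x in (Int.fract (α r) - δ/2)..(Int.fract (α r) + δ/2), φ x)
        + δ^2 * ∫ x in (Int.fract (α r) - δ/2)..(Int.fract (α r) + δ/2), ψ x := by
    intro r
    set b : ℝ := Int.fract (α r) with hb
    have hfr : φ (α r) = φ b := by
      have h1 : α r = b + (⌊α r⌋ : ℤ) := by rw [hb, Int.fract]; ring
      rw [h1, periodic_int_add hφper]
    have hab : b - δ/2 ≤ b + δ/2 := by linarith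
    have havg := avg_bound hφd φc Dc hab (c := b) ⟨by linarith, by linarith⟩
    have hba : (b + δ/2) - (b - δ/2) = δ := by ring
    rw [hba] at havg
    have hDb : ∫ y in (b - δ/2)..(b + δ/2), |D y|
        ≤ δ⁻¹ * (∫ y in (b - δ/2)..(b + δ/2), φ y)
          + δ * ∫ y in (b - δ/2)..(b + δ/2), ψ y := by
      have h1 : ∫ y in (b - δ/2)..(b + δ/2), |D y|
          ≤ ∫ y in (b - δ/2)..(b + δ/2), (δ⁻¹ * φ y + δ * ψ y) :=
        intervalIntegral.integral_mono_on hab (Dc.abs.intervalIntegrable _ _)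
          (((continuous_const.mul φc).add (continuous_const.mul ψc)).intervalIntegrable _ _)
          (fun y _ => habs y)
      rw [intervalIntegral.integral_add ((φc.intervalIntegrable _ _).const_mul δ⁻¹)
        ((ψc.intervalIntegrable _ _).const_mul δ), intervalIntegral.integral_const_mul,
        intervalIntegral.integral_const_mul] at h1
      exact h1
    rw [hfr]
    have hexp : δ * (δ⁻¹ * (∫ y in (b - δ/2)..(b + δ/2), φ y)
          + δ * ∫ y in (b - δ/2)..(b + δ/2), ψ y)
        = (∫ y in (b - δ/2)..(b + δ/2), φ y)
          + δ^2 * ∫ y in (b - δ/2)..(b + δ/2), ψ y := by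
      field_simp
    nlinarith [mul_le_mul_of_nonneg_left hDb hδ0.le]
  -- overlap hypothesis for the shifted points
  have hK' : ∀ x : ℝ, (((Finset.Icc 1 R).filter
      (fun r => x ∈ Set.Ioc (Int.fract (α r) - δ/2) (Int.fract (α r) + δ/2))).card : ℝ) ≤ K := by
    intro x
    refine le_trans ?_ (hK x)
    have hsub : (Finset.Icc 1 R).filter
        (fun r => x ∈ Set.Ioc (Int.fract (α r) - δ/2) (Int.fract (α r) + δ/2))
        ⊆ (Finset.Icc 1 R).filter (fun r => |α r - x - round (α r - x)| ≤ Δ) := by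
      intro r hr
      rw [Finset.mem_filter] at hr ⊢
      refine ⟨hr.1, ?_⟩
      obtain ⟨h1, h2⟩ := hr.2
      have ht : α r - x = (Int.fract (α r) - x) + (⌊α r⌋ : ℤ) := by
        rw [Int.fract]; ring
      have htb : |Int.fract (α r) - x| ≤ δ/2 := by
        rw [abs_le]; constructor <;> linarith
      have hround : round (Int.fract (α r) - x) = 0 := by
        rw [round_eq_zero_iff]
        constructor <;> [linarith; linarith]
      rw [ht, round_add_intCast, hround]
      push_cast
      have : α r - x - (Int.fract (α r) - x) - (⌊α r⌋:ℝ) = 0 := by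
        rw [Int.fract]; ring
      calc |Int.fract (α r) - x + (⌊α r⌋:ℝ) - (0 + (⌊α r⌋:ℝ))| 
          = |Int.fract (α r) - x| := by ring_nf
        _ ≤ δ/2 := htb
        _ ≤ Δ := by linarith
    exact_mod_cast Nat.cast_le.2 (Finset.card_le_card hsub)
  have hβmem : ∀ r, r ∈ Finset.Icc 1 R → Int.fract (α r) ∈ Set.Icc (0:ℝ) 1 :=
    fun r _ => ⟨Int.fract_nonneg _, (Int.fract_lt_one _).le⟩
  -- sum the local bounds
  have hZ : ∫ x in (0:ℝ)..1, φ x = Zsum N f := by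
    rw [hφ]
    rw [trigP_parseval s f]
    rfl
  have hΨ : ∫ x in (0:ℝ)..1, ψ x = ∑ n ∈ s, ‖c' n‖^2 := trigP_parseval s c'
  have hΨle : ∑ n ∈ s, ‖c' n‖^2 ≤ 4 * Real.pi^2 * N^2 * Zsum N f := by
    have hM : ∀ n : ℕ, n ∈ s → (n:ℝ) ≤ N := by
      intro n hn
      rw [hs, Finset.mem_Icc] at hn
      exact le_trans (Nat.cast_le.2 hn.2) (Nat.floor_le hN0.le)
    have : ∀ n ∈ s, ‖c' n‖^2 ≤ 4 * Real.pi^2 * N^2 * ‖f n‖^2 := by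
      intro n hn
      have : ‖c' n‖ = 2 * Real.pi * n * ‖f n‖ := by
        rw [hc']
        simp only [norm_mul, Complex.norm_ofNat, Complex.norm_real, Real.norm_eq_abs,
          Complex.norm_I, Complex.norm_natCast, abs_of_pos Real.pi_pos, mul_one]
      rw [this]
      have hn' := hM n hn
      have h0 : (0:ℝ) ≤ (n:ℝ) := Nat.cast_nonneg _
      have h1 : (n:ℝ)^2 ≤ N^2 := pow_le_pow_left₀ h0 hn' 2
      nlinarith [mul_le_mul_of_nonneg_left (mul_le_mul_of_nonneg_right h1 (sq_nonneg (‖f n‖)))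
        (by positivity : (0:ℝ) ≤ 4 * Real.pi^2)]
    calc ∑ n ∈ s, ‖c' n‖^2 ≤ ∑ n ∈ s, 4 * Real.pi^2 * N^2 * ‖f n‖^2 :=
          Finset.sum_le_sum this
      _ = 4 * Real.pi^2 * N^2 * Zsum N f := by
          rw [← Finset.mul_sum]
          rfl
  have hOφ := overlap_sum φc φ0 R (fun r => Int.fract (α r)) hβmem hδ0 hδ2 K hK'
  have hOψ := overlap_sum ψc ψ0 R (fun r => Int.fract (α r)) hβmem hδ0 hδ2 K hK'
  beta_reduce at hOφ hOψ
  rw [split_per φc hφper, hZ] at hOφ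
  rw [split_per ψc hψper, hΨ] at hOψ
  -- positivity facts
  have hZ0 : 0 ≤ Zsum N f := Finset.sum_nonneg fun n _ => sq_nonneg _
  have hK0 : 0 ≤ K := le_trans (Nat.cast_nonneg _) (hK 0)
  have hΔinv0 : 0 ≤ Δ⁻¹ := (inv_pos.2 hΔ).le
  -- combine
  have hsum : δ * ∑ r ∈ Finset.Icc 1 R, φ (α r)
      ≤ 4 * K * Zsum N f + 8 * Real.pi^2 * δ^2 * K * N^2 * Zsum N f := by
    have h1 : δ * ∑ r ∈ Finset.Icc 1 R, φ (α r)
        = ∑ r ∈ Finset.Icc 1 R, δ * φ (α r) := Finset.mul_sum _ _ _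
    have h2 : ∑ r ∈ Finset.Icc 1 R, δ * φ (α r)
        ≤ ∑ r ∈ Finset.Icc 1 R,
          (2 * (∫ x in (Int.fract (α r) - δ/2)..(Int.fract (α r) + δ/2), φ x)
            + δ^2 * ∫ x in (Int.fract (α r) - δ/2)..(Int.fract (α r) + δ/2), ψ x) :=
      Finset.sum_le_sum fun r _ => key r
    rw [Finset.sum_add_distrib] at h2
    have e5 : (∑ r ∈ Finset.Icc 1 R,
        2 * ∫ x in (Int.fract (α r) - δ/2)..(Int.fract (α r) + δ/2), φ x)
        = 2 * ∑ r ∈ Finset.Icc 1 R,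
            ∫ x in (Int.fract (α r) - δ/2)..(Int.fract (α r) + δ/2), φ x :=
      (Finset.mul_sum _ _ _).symm
    have e6 : (∑ r ∈ Finset.Icc 1 R,
        δ^2 * ∫ x in (Int.fract (α r) - δ/2)..(Int.fract (α r) + δ/2), ψ x)
        = δ^2 * ∑ r ∈ Finset.Icc 1 R,
            ∫ x in (Int.fract (α r) - δ/2)..(Int.fract (α r) + δ/2), ψ x :=
      (Finset.mul_sum _ _ _).symm
    rw [e5, e6] at h2
    have h3 : (2:ℝ) * ∑ r ∈ Finset.Icc 1 R,
        ∫ x in (Int.fract (α r) - δ/2)..(Int.fract (α r) + δ/2), φ x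
        ≤ 2 * (K * (2 * Zsum N f)) := by linarith
    have h4 : δ^2 * ∑ r ∈ Finset.Icc 1 R,
        ∫ x in (Int.fract (α r) - δ/2)..(Int.fract (α r) + δ/2), ψ x
        ≤ δ^2 * (K * (2 * (4 * Real.pi^2 * N^2 * Zsum N f))) := by
      have hδsq : (0:ℝ) ≤ δ^2 := sq_nonneg _
      have : K * (2 * ∑ n ∈ s, ‖c' n‖^2) ≤ K * (2 * (4 * Real.pi^2 * N^2 * Zsum N f)) := by
        apply mul_le_mul_of_nonneg_left _ hK0
        linarith
      calc δ^2 * ∑ r ∈ Finset.Icc 1 R,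
          ∫ x in (Int.fract (α r) - δ/2)..(Int.fract (α r) + δ/2), ψ x
          ≤ δ^2 * (K * (2 * ∑ n ∈ s, ‖c' n‖^2)) :=
            mul_le_mul_of_nonneg_left hOψ hδsq
        _ ≤ δ^2 * (K * (2 * (4 * Real.pi^2 * N^2 * Zsum N f))) :=
            mul_le_mul_of_nonneg_left this hδsq
    rw [h1]
    have hgoal : 2 * (K * (2 * Zsum N f)) + δ^2 * (K * (2 * (4 * Real.pi^2 * N^2 * Zsum N f)))
        = 4 * K * Zsum N f + 8 * Real.pi^2 * δ^2 * K * N^2 * Zsum N f := by ring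
    linarith [h2, h3, h4]
  -- finish
  have hLHS : ∑ r ∈ Finset.Icc 1 R, ‖expSum N f (α r)‖ ^ 2
      = ∑ r ∈ Finset.Icc 1 R, φ (α r) := by
    refine Finset.sum_congr rfl fun r _ => ?_
    rw [hφ]
    rfl
  rw [hLHS]
  have hδinv : δ⁻¹ ≤ N + Δ⁻¹ := by
    rcases min_cases Δ N⁻¹ with ⟨h, _⟩ | ⟨h, _⟩
    · rw [hδdef, h]; linarith
    · rw [hδdef, h, inv_inv]; linarith
  have hδN2 : δ * N^2 ≤ N := by
    calc δ * N^2 ≤ N⁻¹ * N^2 := mul_le_mul_of_nonneg_right hδN (sq_nonneg _)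
      _ = N := by field_simp
  have hfin : ∑ r ∈ Finset.Icc 1 R, φ (α r)
      ≤ 4 * δ⁻¹ * K * Zsum N f + 8 * Real.pi^2 * δ * K * N^2 * Zsum N f := by
    have h5 := mul_le_mul_of_nonneg_left hsum (inv_nonneg.2 hδ0.le)
    have h6 : δ⁻¹ * (δ * ∑ r ∈ Finset.Icc 1 R, φ (α r))
        = ∑ r ∈ Finset.Icc 1 R, φ (α r) := by
      rw [← mul_assoc, inv_mul_cancel₀ (ne_of_gt hδ0), one_mul]
    have h7 : δ⁻¹ * (4 * K * Zsum N f + 8 * Real.pi^2 * δ^2 * K * N^2 * Zsum N f)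
        = 4 * δ⁻¹ * K * Zsum N f + 8 * Real.pi^2 * δ * K * N^2 * Zsum N f := by
      field_simp
    rw [h6, h7] at h5
    exact h5
  have hπ : Real.pi ≤ 4 := Real.pi_le_four
  have hπ0 : 0 < Real.pi := Real.pi_pos
  have t1 : 4 * δ⁻¹ * K * Zsum N f ≤ 4 * (N + Δ⁻¹) * K * Zsum N f := by
    have := mul_le_mul_of_nonneg_right (mul_le_mul_of_nonneg_right
      (mul_le_mul_of_nonneg_left hδinv (by norm_num : (0:ℝ) ≤ 4)) hK0) hZ0
    linarith
  have t2 : 8 * Real.pi^2 * δ * K * N^2 * Zsum N f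
      ≤ 128 * (N + Δ⁻¹) * K * Zsum N f := by
    have e1 : 8 * Real.pi^2 * δ * K * N^2 * Zsum N f
        = 8 * Real.pi^2 * (δ * N^2) * (K * Zsum N f) := by ring
    have e2 : (0:ℝ) ≤ K * Zsum N f := mul_nonneg hK0 hZ0
    have hp2 : Real.pi^2 ≤ 16 := by nlinarith [Real.pi_le_four, Real.pi_pos]
    have hδN20 : 0 ≤ δ * N^2 := mul_nonneg hδ0.le (sq_nonneg N)
    have e3 : 8 * Real.pi^2 * (δ * N^2) ≤ 128 * (N + Δ⁻¹) := by
      have i1 : 8 * Real.pi^2 * (δ * N^2) ≤ 8 * 16 * (δ * N^2) := by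
        have := mul_le_mul_of_nonneg_right hp2 hδN20
        linarith
      have i2 : (8:ℝ) * 16 * (δ * N^2) ≤ 128 * N := by linarith
      linarith
    rw [e1]
    have := mul_le_mul_of_nonneg_right e3 e2
    linarith
  calc ∑ r ∈ Finset.Icc 1 R, φ (α r)
      ≤ 4 * δ⁻¹ * K * Zsum N f + 8 * Real.pi^2 * δ * K * N^2 * Zsum N f := hfin
    _ ≤ 4 * (N + Δ⁻¹) * K * Zsum N f + 128 * (N + Δ⁻¹) * K * Zsum N f := by linarith
    _ = 132 * K * (N + Δ⁻¹) * Zsum N f := by ring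
end

section
/- There is an absolute constant c₁₁ > 0 such that the following holds. Let 0 ≤ M ≤ Q, let 𝒮 be a finite set of positive integers contained in (M, M+Q], let 0 < Δ ≤ 1/2, and let α ∈ ℝ. Let P(α) = #{ (a,q) : q ∈ 𝒮, 1 ≤ a ≤ q, gcd(a,q)=1, α − Δ ≤ a/q ≤ α + Δ }, and let U = 1 if M < 1/√Δ and U = 0 otherwise. Then P(α) ≤ c₁₁ · ( U + max_{r ≤ 1/√Δ} max_{Δ ≤ z ≤ √Δ/r} max_{h ∈ ℤ, gcd(h,r)=1} ∑_{t ∣ r} ∑_{0 < m ≤ 4rzQ/t, gcd(m, r/t)=1} A_t( ΔQ/(tz), r/t, hm ) ), where the maximum over r runs over positive integers r ≤ 1/√Δ, the maximum over z runs over real z with Δ ≤ z ≤ √Δ/r, and the inner sums run over positive divisors t of r and positive integers m. -/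
open Finset

noncomputable def A (𝒮 : Finset ℕ) (M Q : ℝ) (t k : ℕ) (l : ℤ) (u : ℝ) : ℕ :=
  sSup {n : ℕ | ∃ y : ℝ, M / t ≤ y ∧ y ≤ (M + Q) / t ∧
    n = Set.ncard {q : ℕ | t * q ∈ 𝒮 ∧ y < (q : ℝ) ∧ (q : ℝ) ≤ y + u ∧
      (q : ℤ) ≡ l [ZMOD (k : ℤ)]}}

section Aux

variable {𝒮 : Finset ℕ} {M Q u y : ℝ} {t k : ℕ} {l : ℤ}

lemma countSet_subset (ht : 0 < t) :
    {q : ℕ | t * q ∈ 𝒮 ∧ y < (q : ℝ) ∧ (q : ℝ) ≤ y + u ∧ (q : ℤ) ≡ l [ZMOD (k : ℤ)]}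
      ⊆ (fun q => t * q) ⁻¹' ↑𝒮 := fun q hq => hq.1

lemma countSet_finite (ht : 0 < t) :
    {q : ℕ | t * q ∈ 𝒮 ∧ y < (q : ℝ) ∧ (q : ℝ) ≤ y + u ∧ (q : ℤ) ≡ l [ZMOD (k : ℤ)]}.Finite := by
  refine Set.Finite.subset (Set.Finite.preimage ?_ 𝒮.finite_toSet) (countSet_subset ht)
  exact Set.injOn_of_injective (fun a b hab => Nat.eq_of_mul_eq_mul_left ht hab)

lemma countSet_ncard_le (ht : 0 < t) :
    ({q : ℕ | t * q ∈ 𝒮 ∧ y < (q : ℝ) ∧ (q : ℝ) ≤ y + u ∧ (q : ℤ) ≡ l [ZMOD (k : ℤ)]}).ncard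
      ≤ 𝒮.card := by
  rw [← Set.ncard_coe_finset 𝒮]
  refine Set.ncard_le_ncard_of_injOn (fun q => t * q) (fun q hq => hq.1)
    (Set.injOn_of_injective (fun a b hab => Nat.eq_of_mul_eq_mul_left ht hab)) 𝒮.finite_toSet

lemma A_bddAbove (ht : 0 < t) :
    BddAbove {n : ℕ | ∃ y : ℝ, M / t ≤ y ∧ y ≤ (M + Q) / t ∧
      n = Set.ncard {q : ℕ | t * q ∈ 𝒮 ∧ y < (q : ℝ) ∧ (q : ℝ) ≤ y + u ∧
        (q : ℤ) ≡ l [ZMOD (k : ℤ)]}} := by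
  refine ⟨𝒮.card, fun n hn => ?_⟩
  obtain ⟨y, _, _, rfl⟩ := hn
  exact countSet_ncard_le ht

lemma le_A (ht : 0 < t) (hy1 : M / t ≤ y) (hy2 : y ≤ (M + Q) / t) :
    ({q : ℕ | t * q ∈ 𝒮 ∧ y < (q : ℝ) ∧ (q : ℝ) ≤ y + u ∧ (q : ℤ) ≡ l [ZMOD (k : ℤ)]}).ncard
      ≤ A 𝒮 M Q t k l u :=
  le_csSup (A_bddAbove ht) ⟨y, hy1, hy2, rfl⟩

/-- If all elements of a Finset `F` (after dividing by `t`) land in the window `(y, y+u]`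
with the right congruence, then `F.card ≤ A`. -/
lemma card_le_A (ht : 0 < t) (hy1 : M / t ≤ y) (hy2 : y ≤ (M + Q) / t) (F : Finset ℕ)
    (hmem : ∀ q ∈ F, t ∣ q ∧ q ∈ 𝒮 ∧ y < ((q / t : ℕ) : ℝ) ∧ ((q / t : ℕ) : ℝ) ≤ y + u ∧
      ((q / t : ℕ) : ℤ) ≡ l [ZMOD (k : ℤ)]) :
    F.card ≤ A 𝒮 M Q t k l u := by
  refine le_trans ?_ (le_A (u := u) (l := l) (k := k) ht hy1 hy2)
  have himg : (F.image (fun q => q / t)).card = F.card := by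
    refine Finset.card_image_of_injOn ?_
    intro a ha b hb hab
    obtain ⟨ca, hca⟩ := (hmem a ha).1; obtain ⟨cb, hcb⟩ := (hmem b hb).1
    simp only at hab
    rw [hca, hcb, Nat.mul_div_cancel_left _ ht, Nat.mul_div_cancel_left _ ht] at hab
    rw [hca, hcb, hab]
  rw [← himg, ← Set.ncard_coe_finset]
  refine Set.ncard_le_ncard ?_ (countSet_finite ht)
  intro q' hq'
  simp only [Finset.coe_image, Set.mem_image, Finset.mem_coe] at hq'
  obtain ⟨q, hq, rfl⟩ := hq'
  obtain ⟨hd, hqS, h1, h2, h3⟩ := hmem q hq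
  refine ⟨?_, h1, h2, h3⟩
  rwa [Nat.mul_div_cancel' hd]

end Aux

section Fiber

variable {𝒮 : Finset ℕ} {M Q u : ℝ} {t k : ℕ} {l : ℤ}

lemma window_idx {x u : ℝ} (hx0 : 0 < x) (hu : 0 < u) (hx13 : x ≤ 13 * u) :
    ⌈x / u⌉₊ - 1 < 13 ∧ ((⌈x / u⌉₊ - 1 : ℕ) : ℝ) * u < x ∧
      x ≤ ((⌈x / u⌉₊ - 1 : ℕ) : ℝ) * u + u := by
  have hdiv0 : 0 < x / u := div_pos hx0 hu
  have hn1 : 1 ≤ ⌈x / u⌉₊ := Nat.one_le_ceil_iff.mpr hdiv0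
  have hn13 : ⌈x / u⌉₊ ≤ 13 := Nat.ceil_le.mpr (by rw [div_le_iff₀ hu]; push_cast; linarith)
  refine ⟨by omega, ?_, ?_⟩
  · have hlt : (⌈x / u⌉₊ : ℝ) - 1 < x / u := by
      by_contra hcon
      push_neg at hcon
      have h3 : x / u ≤ ((⌈x / u⌉₊ - 1 : ℕ) : ℝ) := by
        rw [Nat.cast_sub hn1]; push_cast; linarith
      have h2 : ⌈x / u⌉₊ ≤ ⌈x / u⌉₊ - 1 := Nat.ceil_le.mpr h3
      omega
    rw [Nat.cast_sub hn1, Nat.cast_one]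
    calc ((⌈x / u⌉₊ : ℝ) - 1) * u < (x / u) * u := by nlinarith
      _ = x := div_mul_cancel₀ x hu.ne'
  · have hle : x / u ≤ (⌈x / u⌉₊ : ℝ) := Nat.le_ceil _
    rw [Nat.cast_sub hn1, Nat.cast_one]
    have hxx : x ≤ (⌈x / u⌉₊ : ℝ) * u := by
      calc x = (x / u) * u := (div_mul_cancel₀ x hu.ne').symm
        _ ≤ (⌈x / u⌉₊ : ℝ) * u := by nlinarith
    linarith

lemma fiber_bound (ht : 0 < t) (hu : 0 < u) (hM : 0 ≤ M) (F : Finset ℕ)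
    (hmem : ∀ q ∈ F, t ∣ q ∧ q ∈ 𝒮 ∧ M < (q : ℝ) ∧ (q : ℝ) ≤ M + Q ∧
      ((q / t : ℕ) : ℤ) ≡ l [ZMOD (k : ℤ)])
    (hspan : ∀ q₁ ∈ F, ∀ q₂ ∈ F, |((q₁ / t : ℕ) : ℝ) - ((q₂ / t : ℕ) : ℝ)| ≤ 6 * u) :
    F.card ≤ 13 * A 𝒮 M Q t k l u := by
  classical
  rcases F.eq_empty_or_nonempty with rfl | ⟨q₀, hq₀⟩
  · simp
  have htR : (0:ℝ) < t := by exact_mod_cast ht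
  have hcast : ∀ q ∈ F, (q : ℝ) = t * ((q / t : ℕ) : ℝ) := by
    intro q hq
    have := Nat.mul_div_cancel' (hmem q hq).1
    exact_mod_cast this.symm
  set L : ℝ := max (M / t) (((q₀ / t : ℕ) : ℝ) - 6 * u - u / 2) with hL
  have hwin : ∀ q ∈ F, L < ((q / t : ℕ) : ℝ) ∧ ((q / t : ℕ) : ℝ) ≤ L + 13 * u := by
    intro q hq
    have h1 : M / t < ((q / t : ℕ) : ℝ) := by
      rw [div_lt_iff₀ htR]
      have := (hmem q hq).2.2.1
      rw [hcast q hq] at this; linarith [this]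
    have h2 := hspan q hq q₀ hq₀
    rw [abs_le] at h2
    constructor
    · rw [hL]
      apply max_lt h1
      linarith [h2.1, hu]
    · have hL2 : ((q₀ / t : ℕ) : ℝ) - 6 * u - u / 2 ≤ L := le_max_right _ _
      linarith [h2.2]
  set idx : ℕ → ℕ := fun q => ⌈(((q / t : ℕ) : ℝ) - L) / u⌉₊ - 1 with hidxdef
  have hidx : ∀ q ∈ F, idx q < 13 ∧
      L + (idx q : ℝ) * u < ((q / t : ℕ) : ℝ) ∧
      ((q / t : ℕ) : ℝ) ≤ L + (idx q : ℝ) * u + u := by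
    intro q hq
    obtain ⟨hw1, hw2⟩ := hwin q hq
    obtain ⟨ha, hb, hc⟩ := window_idx (x := ((q / t : ℕ) : ℝ) - L) (u := u)
      (by linarith) hu (by linarith)
    exact ⟨ha, by linarith, by linarith⟩
  have hfib := Finset.card_eq_sum_card_fiberwise
    (f := idx) (t := Finset.range 13) (s := F) (fun q hq => Finset.mem_range.mpr (hidx q hq).1)
  rw [hfib]
  have hbound : ∀ i ∈ Finset.range 13,
      (F.filter fun q => idx q = i).card ≤ A 𝒮 M Q t k l u := by
    intro i _
    set G := F.filter fun q => idx q = i with hG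
    rcases G.eq_empty_or_nonempty with hGe | ⟨q₁, hq₁⟩
    · rw [hGe]; simp
    have hq₁F : q₁ ∈ F := (Finset.mem_filter.mp hq₁).1
    have hq₁i : idx q₁ = i := (Finset.mem_filter.mp hq₁).2
    set y : ℝ := L + (i : ℝ) * u with hy
    have hyM : M / t ≤ y := by
      have : M / t ≤ L := le_max_left _ _
      have hi0 : (0:ℝ) ≤ (i:ℝ) * u := mul_nonneg (Nat.cast_nonneg _) hu.le
      linarith
    have hyQ : y ≤ (M + Q) / t := by
      obtain ⟨_, hw2, _⟩ := hidx q₁ hq₁F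
      rw [hq₁i] at hw2
      have hub : ((q₁ / t : ℕ) : ℝ) ≤ (M + Q) / t := by
        rw [le_div_iff₀ htR]
        have := (hmem q₁ hq₁F).2.2.2.1
        rw [hcast q₁ hq₁F] at this; linarith
      linarith
    refine card_le_A ht hyM hyQ G ?_
    intro q hqG
    have hqF : q ∈ F := (Finset.mem_filter.mp hqG).1
    have hqi : idx q = i := (Finset.mem_filter.mp hqG).2
    obtain ⟨hd, hS, _, _, hcong⟩ := hmem q hqF
    obtain ⟨_, hw2, hw3⟩ := hidx q hqF
    rw [hqi] at hw2 hw3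
    exact ⟨hd, hS, hw2, by linarith, hcong⟩
  calc ∑ i ∈ Finset.range 13, (F.filter fun q => idx q = i).card
      ≤ ∑ i ∈ Finset.range 13, A 𝒮 M Q t k l u := Finset.sum_le_sum hbound
    _ = 13 * A 𝒮 M Q t k l u := by simp [Finset.sum_const, Finset.card_range]

end Fiber

section Side

set_option maxHeartbeats 1000000 in
lemma side_bound (𝒮 : Finset ℕ) (M Q Δ α : ℝ) (r : ℕ) (h₀ uu vv ε : ℤ)
    (f : ℕ → ℕ) (T : Finset ℕ) (β z : ℝ)
    (hr0 : 0 < r) (hQ : 0 < Q) (hΔ : 0 < Δ) (hM : 0 ≤ M) (hMQ : M ≤ Q)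
    (hβ : β = |α - (h₀ : ℝ) / r|)
    (hbez : uu * h₀ + vv * r = 1)
    (hε : ε = 1 ∨ ε = -1)
    (hz : z = max Δ ((β + Δ) * (M + Q) / (4 * Q)))
    (hT : ∀ q ∈ T, q ∈ 𝒮 ∧ 0 < q ∧ M < (q : ℝ) ∧ (q : ℝ) ≤ M + Q ∧
      Nat.gcd (f q) q = 1 ∧ α - Δ ≤ (f q : ℝ) / q ∧ (f q : ℝ) / q ≤ α + Δ ∧
      0 < ε * ((f q : ℤ) * r - h₀ * q)) :
    T.card ≤ 13 * ∑ t ∈ r.divisors,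
      ∑ m ∈ (Finset.Icc 1 ⌊4 * r * z * Q / t⌋₊).filter (fun m => Nat.gcd m (r / t) = 1),
        A 𝒮 M Q t (r / t) ((-ε * uu) * m) (Δ * Q / (t * z)) := by
  classical
  have hrR : (0:ℝ) < r := by exact_mod_cast hr0
  have hε2 : ε * ε = 1 := by rcases hε with rfl | rfl <;> norm_num
  have hεR : (ε:ℝ) * (ε:ℝ) = 1 := by exact_mod_cast hε2
  have hεabs : |(ε:ℝ)| = 1 := by rcases hε with rfl | rfl <;> norm_num
  have hβ0 : 0 ≤ β := hβ ▸ abs_nonneg _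
  have hz0 : 0 < z := lt_of_lt_of_le hΔ (hz ▸ le_max_left _ _)
  have hzΔ : Δ ≤ z := hz ▸ le_max_left _ _
  have hzm : (β + Δ) * (M + Q) / (4 * Q) ≤ z := hz ▸ le_max_right _ _
  have hzm' : (β + Δ) * (M + Q) ≤ 4 * z * Q := by
    have := (div_le_iff₀ (by positivity : (0:ℝ) < 4 * Q)).mp hzm
    linarith
  set tq : ℕ → ℕ := fun q => Nat.gcd q r with htqdef
  set μ : ℕ → ℤ := fun q => ε * ((f q : ℤ) * ((r / tq q : ℕ) : ℤ) - h₀ * ((q / tq q : ℕ) : ℤ))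
    with hμdef
  have hμapp : ∀ q, μ q = ε * ((f q : ℤ) * ((r / tq q : ℕ) : ℤ) - h₀ * ((q / tq q : ℕ) : ℤ)) :=
    fun q => by rw [hμdef]
  clear_value μ
  have hfacts : ∀ q ∈ T, 0 < tq q ∧ tq q ∣ q ∧ tq q ∣ r ∧
      ε * ((f q : ℤ) * r - h₀ * q) = (tq q : ℤ) * μ q ∧ 0 < μ q := by
    intro q hq
    obtain ⟨_, hq0, _, _, _, _, _, hmzpos⟩ := hT q hq
    have h1 : 0 < tq q := Nat.gcd_pos_of_pos_left r hq0
    have h2 : tq q ∣ q := Nat.gcd_dvd_left q r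
    have h3 : tq q ∣ r := Nat.gcd_dvd_right q r
    have e2 : (tq q : ℤ) * ((q / tq q : ℕ) : ℤ) = (q : ℤ) := by
      exact_mod_cast Nat.mul_div_cancel' h2
    have e3 : (tq q : ℤ) * ((r / tq q : ℕ) : ℤ) = (r : ℤ) := by
      exact_mod_cast Nat.mul_div_cancel' h3
    have e4 : ε * ((f q : ℤ) * r - h₀ * q) = (tq q : ℤ) * μ q := by
      rw [hμapp]
      rw [← e2, ← e3]; ring
    have h5 : 0 < μ q := by
      have htqZ : (0:ℤ) < (tq q : ℤ) := by exact_mod_cast h1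
      rw [e4] at hmzpos
      by_contra hcon
      push_neg at hcon
      nlinarith
    exact ⟨h1, h2, h3, e4, h5⟩
  -- real-valued facts
  set w : ℕ → ℝ := fun q => (tq q : ℝ) * ((μ q : ℤ) : ℝ) with hwdef
  have hwapp : ∀ q, w q = (tq q : ℝ) * ((μ q : ℤ) : ℝ) := fun q => by rw [hwdef]
  clear_value w
  have hwfacts : ∀ q ∈ T, 0 < w q ∧
      (f q : ℝ) * r - h₀ * q = (ε:ℝ) * w q ∧
      w q ≤ (β + Δ) * q * r ∧ (2 * Δ ≤ β → (β - Δ) * q * r ≤ w q) := by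
    intro q hq
    obtain ⟨hS, hq0, hMq, hqMQ, hgcd, hglo, hghi, hmz⟩ := hT q hq
    obtain ⟨h1, h2, h3, e4, h5⟩ := hfacts q hq
    have hqR : (0:ℝ) < q := by exact_mod_cast hq0
    have hw0 : 0 < w q := by
      have h' : (0:ℤ) < (tq q : ℤ) * μ q :=
        mul_pos (by exact_mod_cast h1) h5
      rw [hwapp]
      exact_mod_cast h'
    have he4R : (ε:ℝ) * ((f q : ℝ) * r - h₀ * q) = w q := by
      have := e4
      have : ((ε * ((f q : ℤ) * r - h₀ * q) : ℤ) : ℝ) = (((tq q : ℤ) * μ q : ℤ) : ℝ) := by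
        exact_mod_cast congrArg (fun x : ℤ => (x : ℝ)) e4
      push_cast at this
      simp only [hwdef]
      push_cast
      linarith
    have hidm : (f q : ℝ) * r - h₀ * q = (ε:ℝ) * w q := by
      have h := congrArg (fun x => (ε:ℝ) * x) he4R
      simp only [← mul_assoc, hεR, one_mul] at h
      exact h
    -- |f/q - h₀/r| bounds
    have hgm : |(f q : ℝ) / q - (h₀:ℝ) / r| = w q / (q * r) := by
      have hqr : (0:ℝ) < q * r := by positivity
      have hrewrite : (f q : ℝ) / q - (h₀:ℝ) / r = ((f q : ℝ) * r - h₀ * q) / (q * r) := by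
        field_simp
      rw [hrewrite, hidm, abs_div, abs_mul, hεabs, one_mul, abs_of_pos hw0,
        abs_of_pos hqr]
    have htri : |(f q : ℝ) / q - (h₀:ℝ) / r| ≤ β + Δ := by
      have h1' : |(f q : ℝ) / q - α| ≤ Δ := abs_le.mpr ⟨by linarith, by linarith⟩
      calc |(f q : ℝ) / q - (h₀:ℝ) / r| ≤ |(f q : ℝ) / q - α| + |α - (h₀:ℝ)/r| :=
            abs_sub_le _ _ _
        _ ≤ Δ + β := by rw [← hβ]; linarith
        _ = β + Δ := by ring
    have hup : w q ≤ (β + Δ) * q * r := by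
      have hqr : (0:ℝ) < q * r := by positivity
      have := hgm ▸ htri
      calc w q = w q / (q * r) * (q * r) := by field_simp
        _ ≤ (β + Δ) * (q * r) := by
            apply mul_le_mul_of_nonneg_right _ hqr.le
            rw [← hgm]; exact htri
        _ = (β + Δ) * q * r := by ring
    refine ⟨hw0, hidm, hup, ?_⟩
    intro h2Δ
    have h1' : |α - (f q : ℝ) / q| ≤ Δ := by
      rw [abs_sub_comm]; exact abs_le.mpr ⟨by linarith, by linarith⟩
    have hlow : β - Δ ≤ |(f q : ℝ) / q - (h₀:ℝ) / r| := by
      have habc := abs_sub_le α ((f q : ℝ)/q) ((h₀:ℝ)/r)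
      rw [hβ]
      linarith
    have hqr : (0:ℝ) < q * r := by positivity
    rw [hgm] at hlow
    calc (β - Δ) * q * r = (β - Δ) * (q * r) := by ring
      _ ≤ w q / (q * r) * (q * r) := mul_le_mul_of_nonneg_right hlow hqr.le
      _ = w q := by field_simp
  -- index map into the sigma finset
  set D := r.divisors.sigma (fun t => (Finset.Icc 1 ⌊4 * r * z * Q / t⌋₊).filter
      (fun m => Nat.gcd m (r / t) = 1)) with hDdef
  clear_value D
  set idx : ℕ → (Σ _ : ℕ, ℕ) := fun q => ⟨tq q, (μ q).toNat⟩ with hidxdef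
  have hidxapp : ∀ q, idx q = ⟨tq q, (μ q).toNat⟩ := fun q => by rw [hidxdef]
  clear_value idx
  have hmaps : ∀ q ∈ T, idx q ∈ D := by
    intro q hq
    obtain ⟨hS, hq0, hMq, hqMQ, hgcd, hglo, hghi, hmz⟩ := hT q hq
    obtain ⟨h1, h2, h3, e4, h5⟩ := hfacts q hq
    obtain ⟨hw0, hidm, hup, hlowf⟩ := hwfacts q hq
    have htqR : (0:ℝ) < tq q := by exact_mod_cast h1
    have hμnat : (((μ q).toNat : ℕ) : ℤ) = μ q := Int.toNat_of_nonneg h5.le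
    rw [hidxapp, hDdef, Finset.mem_sigma]
    refine ⟨Nat.mem_divisors.mpr ⟨h3, hr0.ne'⟩, ?_⟩
    rw [Finset.mem_filter, Finset.mem_Icc]
    refine ⟨⟨Nat.succ_le_of_lt (Int.lt_toNat.mpr (by exact_mod_cast h5)), ?_⟩, ?_⟩
    · apply Nat.le_floor
      rw [le_div_iff₀ htqR]
      have hcast : (((μ q).toNat : ℕ) : ℝ) * (tq q : ℝ) = w q := by
        rw [hwapp, mul_comm]
        congr 1
        exact_mod_cast congrArg (fun x : ℤ => (x : ℝ)) hμnat
      rw [hcast]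
      have h0 : (0:ℝ) ≤ β + Δ := by linarith
      have hqR : (0:ℝ) < q := by exact_mod_cast hq0
      have hr0' : (0:ℝ) ≤ r := hrR.le
      calc w q ≤ (β + Δ) * q * r := hup
        _ = (β + Δ) * (q:ℝ) * r := rfl
        _ ≤ (β + Δ) * (M + Q) * r :=
            mul_le_mul_of_nonneg_right (mul_le_mul_of_nonneg_left hqMQ h0) hr0'
        _ ≤ 4 * z * Q * r := by
            have := mul_le_mul_of_nonneg_right hzm' hr0'
            linarith
        _ = 4 * r * z * Q := by ring
    · -- coprimality of m' with r / t
      set d := Nat.gcd ((μ q).toNat) (r / tq q) with hd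
      have hd1 : d ∣ (μ q).toNat := Nat.gcd_dvd_left _ _
      have hd2 : d ∣ r / tq q := Nat.gcd_dvd_right _ _
      have hdZμ : (d:ℤ) ∣ μ q := by rw [← hμnat]; exact_mod_cast hd1
      have hdZrt : (d:ℤ) ∣ ((r / tq q : ℕ) : ℤ) := by exact_mod_cast hd2
      have hμexp : ε * μ q = (f q : ℤ) * ((r / tq q : ℕ) : ℤ) - h₀ * ((q / tq q : ℕ) : ℤ) := by
        rw [hμapp, ← mul_assoc, hε2, one_mul]
      have hdq : (d:ℤ) ∣ h₀ * ((q / tq q : ℕ) : ℤ) := by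
        have h1' : (d:ℤ) ∣ (f q : ℤ) * ((r / tq q : ℕ) : ℤ) := hdZrt.mul_left _
        have h2' : (d:ℤ) ∣ ε * μ q := hdZμ.mul_left _
        have : h₀ * ((q / tq q : ℕ) : ℤ)
            = (f q : ℤ) * ((r / tq q : ℕ) : ℤ) - ε * μ q := by linarith [hμexp]
        rw [this]; exact dvd_sub h1' h2'
      have hdr : d ∣ r := hd2.trans (Nat.div_dvd_of_dvd h3)
      have hcopd : IsCoprime (d:ℤ) h₀ := by
        obtain ⟨e, he⟩ := hdr
        refine ⟨vv * e, uu, ?_⟩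
        have heZ : (r:ℤ) = (d:ℤ) * e := by exact_mod_cast he
        linear_combination hbez - vv * heZ
      have hdvdqt : (d:ℤ) ∣ ((q / tq q : ℕ) : ℤ) := hcopd.dvd_of_dvd_mul_left hdq
      have hdnat : d ∣ q / tq q := by exact_mod_cast hdvdqt
      have hmulq : tq q * d ∣ q := by
        obtain ⟨e, he⟩ := hdnat
        have hq' : q = tq q * (q / tq q) := (Nat.mul_div_cancel' h2).symm
        rw [he] at hq'
        exact ⟨e, hq'.trans (mul_assoc _ _ _).symm⟩
      have hmulr : tq q * d ∣ r := by
        obtain ⟨e, he⟩ := hd2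
        have hr' : r = tq q * (r / tq q) := (Nat.mul_div_cancel' h3).symm
        rw [he] at hr'
        exact ⟨e, hr'.trans (mul_assoc _ _ _).symm⟩
      have hgcddvd : tq q * d ∣ tq q := Nat.dvd_gcd hmulq hmulr
      have hle := Nat.le_of_dvd h1 hgcddvd
      have hdpos : 0 < d := Nat.gcd_pos_of_pos_left _ (by omega)
      nlinarith
  have hcardsum := Finset.card_eq_sum_card_fiberwise hmaps
  have hfibb : ∀ b ∈ D, (T.filter (fun q => idx q = b)).card ≤
      13 * A 𝒮 M Q b.1 (r / b.1) ((-ε * uu) * b.2) (Δ * Q / (b.1 * z)) := by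
    rintro ⟨t, m⟩ hb
    rw [hDdef, Finset.mem_sigma] at hb
    obtain ⟨hbt, hbm⟩ := hb
    have ht0 : 0 < t := Nat.pos_of_mem_divisors hbt
    have htdvd : t ∣ r := (Nat.mem_divisors.mp hbt).1
    have htR : (0:ℝ) < t := by exact_mod_cast ht0
    have hu0 : 0 < Δ * Q / (t * z) := by positivity
    apply fiber_bound ht0 hu0 hM
    · -- membership facts
      intro q hqf
      rw [Finset.mem_filter] at hqf
      obtain ⟨hqT, hqidx⟩ := hqf
      rw [hidxapp] at hqidx
      have hteq : tq q = t := congrArg (fun s : (Σ _ : ℕ, ℕ) => s.1) hqidx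
      have hmeq : (μ q).toNat = m := congrArg (fun s : (Σ _ : ℕ, ℕ) => s.2) hqidx
      obtain ⟨hS, hq0, hMq, hqMQ, hgcd, hglo, hghi, hmz⟩ := hT q hqT
      obtain ⟨h1, h2, h3, e4, h5⟩ := hfacts q hqT
      have hμm : (m : ℤ) = μ q := by rw [← hmeq]; exact Int.toNat_of_nonneg h5.le
      refine ⟨hteq ▸ h2, hS, hMq, hqMQ, ?_⟩
      rw [Int.modEq_iff_dvd]
      have hrtZ : (t:ℤ) * ((r / t : ℕ) : ℤ) = (r:ℤ) := by
        exact_mod_cast Nat.mul_div_cancel' htdvd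
      have hμq := hμapp q
      rw [hteq] at hμq
      refine ⟨-(uu * (f q : ℤ)) - vv * t * ((q / t : ℕ) : ℤ), ?_⟩
      rw [hμm, hμq]
      linear_combination (-(uu * ((f q : ℤ) * ((r / t : ℕ) : ℤ) - h₀ * ((q / t : ℕ) : ℤ)))) * hε2
        + (((q / t : ℕ) : ℤ) * vv) * hrtZ + ((q / t : ℕ) : ℤ) * hbez
    · -- span
      intro q₁ hq₁ q₂ hq₂
      rw [Finset.mem_filter] at hq₁ hq₂
      obtain ⟨hqT₁, hqidx₁⟩ := hq₁
      obtain ⟨hqT₂, hqidx₂⟩ := hq₂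
      rw [hidxapp] at hqidx₁ hqidx₂
      have hteq₁ : tq q₁ = t := congrArg (fun s : (Σ _ : ℕ, ℕ) => s.1) hqidx₁
      have hteq₂ : tq q₂ = t := congrArg (fun s : (Σ _ : ℕ, ℕ) => s.1) hqidx₂
      have hmeq₁ : (μ q₁).toNat = m := congrArg (fun s : (Σ _ : ℕ, ℕ) => s.2) hqidx₁
      have hmeq₂ : (μ q₂).toNat = m := congrArg (fun s : (Σ _ : ℕ, ℕ) => s.2) hqidx₂
      obtain ⟨hS₁, hq0₁, hMq₁, hqMQ₁, hgcd₁, hglo₁, hghi₁, hmz₁⟩ := hT q₁ hqT₁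
      obtain ⟨hS₂, hq0₂, hMq₂, hqMQ₂, hgcd₂, hghi₂', hghi₂, hmz₂⟩ := hT q₂ hqT₂
      obtain ⟨h1₁, h2₁, h3₁, e4₁, h5₁⟩ := hfacts q₁ hqT₁
      obtain ⟨h1₂, h2₂, h3₂, e4₂, h5₂⟩ := hfacts q₂ hqT₂
      obtain ⟨hw0₁, hidm₁, hup₁, hlowf₁⟩ := hwfacts q₁ hqT₁
      obtain ⟨hw0₂, hidm₂, hup₂, hlowf₂⟩ := hwfacts q₂ hqT₂
      have hμeq : μ q₁ = μ q₂ := by omega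
      have hweq : w q₁ = w q₂ := by
        rw [hwapp, hwapp, hteq₁, hteq₂, hμeq]
      have hqR₁ : (0:ℝ) < q₁ := by exact_mod_cast hq0₁
      have hqR₂ : (0:ℝ) < q₂ := by exact_mod_cast hq0₂
      -- cast division
      have hc1 : ((q₁ / t : ℕ) : ℝ) = (q₁ : ℝ) / t := by
        rw [Nat.cast_div (hteq₁ ▸ h2₁) htR.ne']
      have hc2 : ((q₂ / t : ℕ) : ℝ) = (q₂ : ℝ) / t := by
        rw [Nat.cast_div (hteq₂ ▸ h2₂) htR.ne']
      rw [hc1, hc2, div_sub_div_same, abs_div, abs_of_pos htR]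
      rw [div_le_iff₀ htR]
      have hgoal : 6 * (Δ * Q / (t * z)) * t = 6 * Δ * Q / z := by
        field_simp
      rw [hgoal]
      rw [le_div_iff₀ hz0]
      -- core : |q₁ - q₂| * z ≤ 6 Δ Q
      have hcomb : (ε:ℝ) * w q₁ * ((q₂:ℝ) - q₁) = (f q₁ : ℝ) * q₂ * r - (f q₂ : ℝ) * q₁ * r := by
        have hidm₂' : (f q₂ : ℝ) * r - h₀ * q₂ = (ε:ℝ) * w q₁ := by rw [hweq]; exact hidm₂
        linear_combination (q₁:ℝ) * hidm₂' - (q₂:ℝ) * hidm₁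
      have hf₁ : (f q₁ : ℝ) ≤ (α + Δ) * q₁ := by
        have := (div_le_iff₀ hqR₁).mp hghi₁; linarith
      have hf₁' : (α - Δ) * q₁ ≤ (f q₁ : ℝ) := by
        have := (le_div_iff₀ hqR₁).mp hglo₁; linarith
      have hf₂ : (f q₂ : ℝ) ≤ (α + Δ) * q₂ := by
        have := (div_le_iff₀ hqR₂).mp hghi₂; linarith
      have hf₂' : (α - Δ) * q₂ ≤ (f q₂ : ℝ) := by
        have := (le_div_iff₀ hqR₂).mp hghi₂'; linarith
      have habs2 : w q₁ * |(q₂:ℝ) - q₁| ≤ 2 * Δ * (q₁ * q₂ * r) := by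
        have hub : (ε:ℝ) * w q₁ * ((q₂:ℝ) - q₁) ≤ 2 * Δ * (q₁ * q₂ * r) := by
          rw [hcomb]; linarith [mul_le_mul_of_nonneg_right hf₁ (by positivity : (0:ℝ) ≤ (q₂:ℝ) * r), mul_le_mul_of_nonneg_right hf₂' (by positivity : (0:ℝ) ≤ (q₁:ℝ) * r)]
        have hlb : -(2 * Δ * (q₁ * q₂ * r)) ≤ (ε:ℝ) * w q₁ * ((q₂:ℝ) - q₁) := by
          rw [hcomb]; linarith [mul_le_mul_of_nonneg_right hf₂ (by positivity : (0:ℝ) ≤ (q₁:ℝ) * r), mul_le_mul_of_nonneg_right hf₁' (by positivity : (0:ℝ) ≤ (q₂:ℝ) * r)]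
        have : |(ε:ℝ) * w q₁ * ((q₂:ℝ) - q₁)| ≤ 2 * Δ * (q₁ * q₂ * r) := abs_le.mpr ⟨hlb, hub⟩
        rwa [abs_mul, abs_mul, hεabs, one_mul, abs_of_pos hw0₁] at this
      have habs3 : |(q₁:ℝ) - q₂| = |(q₂:ℝ) - q₁| := abs_sub_comm _ _
      rcases le_or_gt (2 * Δ) β with hcase | hcase
      · -- large β
        have hlow₁ : (β - Δ) * q₁ * r ≤ w q₁ := hlowf₁ hcase
        have hP : (0:ℝ) < (q₁:ℝ) * r := mul_pos hqR₁ hrR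
        have hddP : (0:ℝ) ≤ |(q₁:ℝ) - q₂| * ((q₁:ℝ) * r) := by positivity
        have hz34 : z ≤ 3 / 4 * β := by
          rw [hz]
          apply max_le (by linarith)
          rw [div_le_iff₀ (by positivity : (0:ℝ) < 4 * Q)]
          linarith [mul_nonneg (by linarith : (0:ℝ) ≤ β + Δ) (by linarith : (0:ℝ) ≤ 2 * Q - (M + Q)),
            mul_nonneg (by linarith : (0:ℝ) ≤ β - 2 * Δ) hQ.le]
        have h1' : (β - Δ) * q₁ * r * |(q₁:ℝ) - q₂| ≤ 2 * Δ * (q₁ * q₂ * r) := by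
          rw [habs3]
          calc (β - Δ) * q₁ * r * |(q₂:ℝ) - q₁| ≤ w q₁ * |(q₂:ℝ) - q₁| :=
                mul_le_mul_of_nonneg_right hlow₁ (abs_nonneg _)
            _ ≤ 2 * Δ * (q₁ * q₂ * r) := habs2
        have t1 : z * (|(q₁:ℝ) - q₂| * ((q₁:ℝ) * r)) ≤ (3 / 4 * β) * (|(q₁:ℝ) - q₂| * ((q₁:ℝ) * r)) :=
          mul_le_mul_of_nonneg_right hz34 hddP
        have t3 : (Δ * ((q₁:ℝ) * r)) * (q₂:ℝ) ≤ (Δ * ((q₁:ℝ) * r)) * (2 * Q) := by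
          apply mul_le_mul_of_nonneg_left (by linarith) (by positivity)
        have t5 : (0:ℝ) ≤ (β - 2 * Δ) * (|(q₁:ℝ) - q₂| * ((q₁:ℝ) * r)) :=
          mul_nonneg (by linarith) hddP
        have hfinal : (|(q₁:ℝ) - q₂| * z) * ((q₁:ℝ) * r) ≤ (6 * Δ * Q) * ((q₁:ℝ) * r) := by
          linarith [t1, h1', t3, t5]
        exact le_of_mul_le_mul_right hfinal hP
      · -- small β
        have hdQ : |(q₁:ℝ) - q₂| ≤ Q := by
          rw [abs_le]; constructor <;> linarith
        have hz32 : z ≤ 3 / 2 * Δ := by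
          rw [hz]
          apply max_le (by linarith)
          rw [div_le_iff₀ (by positivity : (0:ℝ) < 4 * Q)]
          linarith [mul_nonneg (by linarith : (0:ℝ) ≤ β + Δ) (by linarith : (0:ℝ) ≤ 2 * Q - (M + Q)),
            mul_nonneg (by linarith : (0:ℝ) ≤ 2 * Δ - β) hQ.le]
        have u1 : |(q₁:ℝ) - q₂| * z ≤ Q * z := mul_le_mul_of_nonneg_right hdQ hz0.le
        have u2 : Q * z ≤ Q * (3 / 2 * Δ) := mul_le_mul_of_nonneg_left hz32 hQ.le
        linarith [u1, u2, mul_nonneg hΔ.le hQ.le]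
  calc T.card = ∑ b ∈ D, (T.filter (fun q => idx q = b)).card := hcardsum
    _ ≤ ∑ b ∈ D, 13 * A 𝒮 M Q b.1 (r / b.1) ((-ε * uu) * b.2) (Δ * Q / (b.1 * z)) :=
        Finset.sum_le_sum hfibb
    _ = 13 * ∑ b ∈ D, A 𝒮 M Q b.1 (r / b.1) ((-ε * uu) * b.2) (Δ * Q / (b.1 * z)) := by
        rw [Finset.mul_sum]
    _ = 13 * ∑ t ∈ r.divisors,
          ∑ m ∈ (Finset.Icc 1 ⌊4 * r * z * Q / t⌋₊).filter (fun m => Nat.gcd m (r / t) = 1),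
            A 𝒮 M Q t (r / t) ((-ε * uu) * m) (Δ * Q / (t * z)) := by
        rw [hDdef, Finset.sum_sigma]

end Side

section MoreAux

lemma card_le_interval (F : Finset ℕ) (x v : ℝ) (hv : 0 ≤ v)
    (h : ∀ a ∈ F, x ≤ (a : ℝ) ∧ (a : ℝ) ≤ x + v) : (F.card : ℝ) ≤ v + 1 := by
  rcases F.eq_empty_or_nonempty with rfl | hne
  · simp; linarith
  · set a₀ := F.min' hne with ha₀
    have ha₀F : a₀ ∈ F := F.min'_mem hne
    have hsub : F ⊆ Finset.Icc a₀ (a₀ + ⌊v⌋₊) := by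
      intro a ha
      rw [Finset.mem_Icc]
      refine ⟨F.min'_le a ha, ?_⟩
      have h1 := (h a ha).2
      have h2 := (h a₀ ha₀F).1
      have h3 : (a : ℝ) ≤ (a₀ : ℝ) + v := by linarith
      have h4 : a₀ ≤ a := F.min'_le a ha
      have h5 : ((a - a₀ : ℕ) : ℝ) ≤ v := by
        rw [Nat.cast_sub h4]; linarith
      have h6 : a - a₀ ≤ ⌊v⌋₊ := Nat.le_floor h5
      omega
    calc (F.card : ℝ) ≤ ((Finset.Icc a₀ (a₀ + ⌊v⌋₊)).card : ℝ) := by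
          exact_mod_cast Finset.card_le_card hsub
      _ = (⌊v⌋₊ : ℝ) + 1 := by
          have hcc : (Finset.Icc a₀ (a₀ + ⌊v⌋₊)).card = ⌊v⌋₊ + 1 := by
            rw [Nat.card_Icc]; omega
          rw [hcc]; push_cast; ring
      _ ≤ v + 1 := by linarith [Nat.floor_le hv]

lemma half_le_floor {x : ℝ} (hx : 1 ≤ x) : x / 2 ≤ (⌊x⌋₊ : ℝ) := by
  rcases le_or_gt 2 x with h2 | h2
  · have := Nat.sub_one_lt_floor x
    linarith
  · have h1 : (1 : ℕ) ≤ ⌊x⌋₊ := Nat.le_floor (by exact_mod_cast hx)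
    have : (1:ℝ) ≤ (⌊x⌋₊ : ℝ) := by exact_mod_cast h1
    linarith

lemma card_le_A_full (𝒮 : Finset ℕ) (M Q : ℝ) (l : ℤ) (u : ℝ) (hM : 0 ≤ M) (hQ : 0 ≤ Q)
    (hu : Q ≤ u) (hS : ∀ q ∈ 𝒮, M < (q : ℝ) ∧ (q : ℝ) ≤ M + Q) :
    𝒮.card ≤ A 𝒮 M Q 1 1 l u := by
  have h1 : (M : ℝ) / (1:ℕ) ≤ M := by norm_num
  have h2 : (M : ℝ) ≤ (M + Q) / (1:ℕ) := by norm_num; linarith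
  refine le_trans ?_ (le_A (y := M) (u := u) (l := l) (k := 1) one_pos h1 h2)
  rw [← Set.ncard_coe_finset 𝒮]
  refine Set.ncard_le_ncard ?_ (countSet_finite one_pos)
  intro q hq
  refine ⟨by simpa using hq, (hS q hq).1, by linarith [(hS q hq).2], ?_⟩
  simp [Int.ModEq]

end MoreAux

set_option maxHeartbeats 1600000 in
/-- Lemma 2: the number `P(α)` of Farey fractions `a/q` with `q ∈ 𝒮 ⊆ (M, M+Q]`,
`(a,q) = 1`, `1 ≤ a ≤ q` lying in `[α-Δ, α+Δ]` satisfies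
`P(α) ≤ c₁₁ (U + max_{r ≤ 1/√Δ} max_{Δ ≤ z ≤ √Δ/r} max_{(h,r)=1}
  ∑_{t ∣ r} ∑_{0 < m ≤ 4rzQ/t, (m,r/t)=1} A_t(ΔQ/(tz), r/t, hm))`.
The (attained) triple maximum is expressed by quantifying over all upper bounds `B`
for the inner double sum. -/
theorem stmt_5 :
    ∃ c₁₁ : ℝ, 0 < c₁₁ ∧
      ∀ (M Q Δ α : ℝ) (𝒮 : Finset ℕ),
        0 ≤ M → M ≤ Q →
        (∀ q ∈ 𝒮, 0 < q ∧ M < (q : ℝ) ∧ (q : ℝ) ≤ M + Q) →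
        0 < Δ → Δ ≤ 1 / 2 →
        ∀ B : ℝ,
          (∀ r : ℕ, 0 < r → (r : ℝ) ≤ 1 / Real.sqrt Δ →
            ∀ z : ℝ, Δ ≤ z → z ≤ Real.sqrt Δ / r →
              ∀ h : ℤ, Int.gcd h (r : ℤ) = 1 →
                (∑ t ∈ r.divisors,
                  ∑ m ∈ (Finset.Icc 1 ⌊4 * r * z * Q / t⌋₊).filter
                      (fun m => Nat.gcd m (r / t) = 1),
                    (A 𝒮 M Q t (r / t) (h * m) (Δ * Q / (t * z)) : ℝ)) ≤ B) →
          ((∑ q ∈ 𝒮, ((Finset.Icc 1 q).filter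
              (fun a => Nat.gcd a q = 1 ∧ α - Δ ≤ (a : ℝ) / q ∧ (a : ℝ) / q ≤ α + Δ)).card : ℕ) : ℝ)
            ≤ c₁₁ * ((if M < 1 / Real.sqrt Δ then (1 : ℝ) else 0) + B) := by
  classical
  refine ⟨27, by norm_num, ?_⟩
  intro M Q Δ α 𝒮 hM hMQ hS hΔ hΔhalf B hB
  have hs0 : 0 < Real.sqrt Δ := Real.sqrt_pos.mpr hΔ
  set s : ℝ := Real.sqrt Δ with hsdef
  have hssq : s * s = Δ := Real.mul_self_sqrt hΔ.le
  have hs1 : s < 1 := by nlinarith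
  have hQ0 : 0 ≤ Q := le_trans hM hMQ
  have hU0 : (0:ℝ) ≤ (if M < 1 / s then (1:ℝ) else 0) := by split <;> norm_num
  have hΔles : Δ ≤ s := by nlinarith
  have h1s : (1:ℝ) ≤ 1 / s := by rw [le_div_iff₀ hs0]; linarith
  have hB0 : 0 ≤ B := by
    refine le_trans (Finset.sum_nonneg fun t _ => Finset.sum_nonneg fun m _ => by positivity)
      (hB 1 one_pos (by push_cast; exact h1s) Δ le_rfl (by push_cast; simpa using hΔles) 1
        (by simp))
  set cntF : ℕ → Finset ℕ := fun q => (Finset.Icc 1 q).filter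
      (fun a => Nat.gcd a q = 1 ∧ α - Δ ≤ (a : ℝ) / q ∧ (a : ℝ) / q ≤ α + Δ) with hcntF
  have hcnt : ∀ q ∈ 𝒮, ((cntF q).card : ℝ) ≤ 2 * Δ * (q:ℝ) + 1 := by
    intro q hq
    obtain ⟨hq0, hMq, hqMQ⟩ := hS q hq
    have hqR : (0:ℝ) < q := by exact_mod_cast hq0
    refine card_le_interval _ ((α - Δ) * q) (2 * Δ * q) (by positivity) ?_
    intro a ha
    simp only [hcntF, Finset.mem_filter, Finset.mem_Icc] at ha
    obtain ⟨⟨ha1, ha2⟩, hg, hlo, hhi⟩ := ha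
    constructor
    · have := (le_div_iff₀ hqR).mp hlo
      linarith
    · have := (div_le_iff₀ hqR).mp hhi
      nlinarith
  rcases le_or_gt 1 (4 * Δ * Q) with hbig | hsmall
  · -- Case A : 4ΔQ ≥ 1
    have hQpos : 0 < Q := by nlinarith
    have hfloor : 4 * Δ * Q ≤ 2 * (⌊4 * Δ * Q⌋₊ : ℝ) := by
      have := half_le_floor (x := 4 * Δ * Q) hbig; linarith
    have hsum1 : ((∑ q ∈ 𝒮, (cntF q).card : ℕ) : ℝ) ≤ (𝒮.card : ℝ) * (4 * Δ * Q + 1) := by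
      push_cast
      calc ∑ q ∈ 𝒮, ((cntF q).card : ℝ) ≤ ∑ q ∈ 𝒮, (4 * Δ * Q + 1) := by
            refine Finset.sum_le_sum fun q hq => ?_
            have h1 := hcnt q hq
            have h2 := (hS q hq).2.2
            have h3 := (hS q hq).2.1
            nlinarith
        _ = (𝒮.card : ℝ) * (4 * Δ * Q + 1) := by rw [Finset.sum_const, nsmul_eq_mul]
    have hBlow : (⌊4 * Δ * Q⌋₊ : ℝ) * (𝒮.card : ℝ) ≤ B := by
      have hinst := hB 1 one_pos (by push_cast; exact h1s) Δ le_rfl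
        (by push_cast; simpa using hΔles) 1 (by simp)
      refine le_trans ?_ hinst
      rw [Nat.divisors_one, Finset.sum_singleton]
      have hfx : (4 * ((1:ℕ):ℝ) * Δ * Q / ((1:ℕ):ℝ)) = 4 * Δ * Q := by push_cast; ring_nf
      have hfilter : (Finset.Icc 1 ⌊4 * ((1:ℕ):ℝ) * Δ * Q / ((1:ℕ):ℝ)⌋₊).filter
          (fun m => Nat.gcd m (1 / 1) = 1) = Finset.Icc 1 ⌊4 * Δ * Q⌋₊ := by
        rw [hfx]
        exact Finset.filter_true_of_mem (fun m _ => by simp)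
      rw [hfilter]
      have hterm : ∀ m ∈ Finset.Icc 1 ⌊4 * Δ * Q⌋₊,
          (𝒮.card : ℝ) ≤ (A 𝒮 M Q 1 (1 / 1) (1 * (m:ℕ)) (Δ * Q / (((1:ℕ):ℝ) * Δ)) : ℝ) := by
        intro m _
        have hueq : Δ * Q / (((1:ℕ):ℝ) * Δ) = Q := by
          push_cast; rw [one_mul, mul_comm, mul_div_assoc, div_self hΔ.ne', mul_one]
        rw [hueq]
        have : 𝒮.card ≤ A 𝒮 M Q 1 (1/1) (1 * (m:ℕ)) Q := by
          have h11 : (1:ℕ)/1 = 1 := rfl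
          rw [h11]
          exact card_le_A_full 𝒮 M Q _ Q hM hQ0 le_rfl
            (fun q hq => ⟨(hS q hq).2.1, (hS q hq).2.2⟩)
        exact_mod_cast this
      calc (⌊4 * Δ * Q⌋₊ : ℝ) * (𝒮.card : ℝ)
          = ∑ _m ∈ Finset.Icc 1 ⌊4 * Δ * Q⌋₊, (𝒮.card : ℝ) := by
            rw [Finset.sum_const, Nat.card_Icc, nsmul_eq_mul]
            congr 1
        _ ≤ _ := Finset.sum_le_sum hterm
    have hc0 : (0:ℝ) ≤ (𝒮.card : ℝ) := by positivity
    have h2' : (𝒮.card : ℝ) * (4 * Δ * Q + 1) ≤ 4 * ((⌊4 * Δ * Q⌋₊ : ℝ) * 𝒮.card) := by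
      nlinarith
    linarith [hsum1, hBlow, hU0, hB0]
  · -- Case B : 4ΔQ < 1
    have hcnt1 : ∀ q ∈ 𝒮, (cntF q).card ≤ 1 := by
      intro q hq
      have h1 := hcnt q hq
      have h2 := (hS q hq).2.2
      have h3 := (hS q hq).2.1
      have : ((cntF q).card : ℝ) < 2 := by nlinarith
      exact_mod_cast Nat.lt_succ_iff.mp (by exact_mod_cast this)
    set T := 𝒮.filter (fun q => (cntF q).card ≠ 0) with hT
    have hPT : (∑ q ∈ 𝒮, (cntF q).card) ≤ T.card := by
      calc ∑ q ∈ 𝒮, (cntF q).card = ∑ q ∈ T, (cntF q).card :=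
            (Finset.sum_filter_of_ne (fun q _ h => h)).symm
        _ ≤ ∑ q ∈ T, 1 := Finset.sum_le_sum
            (fun q hq => hcnt1 q (Finset.mem_filter.mp hq).1)
        _ = T.card := by simp
    have hTsub : ∀ q ∈ T, q ∈ 𝒮 := fun q hq => (Finset.mem_filter.mp hq).1
    rcases T.eq_empty_or_nonempty with hTe | ⟨q₀, hq₀⟩
    · have : (∑ q ∈ 𝒮, (cntF q).card) = 0 := by
        rw [hTe, Finset.card_empty] at hPT; omega
      rw [this]
      push_cast
      linarith [hU0, hB0]
    have hQpos : 0 < Q := by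
      have h1 := (hS q₀ (hTsub q₀ hq₀)).1
      have h2 := (hS q₀ (hTsub q₀ hq₀)).2.2
      have : (1:ℝ) ≤ (q₀:ℝ) := by exact_mod_cast h1
      linarith
    -- choose a numerator for each q ∈ T
    have hTa : ∀ q, q ∈ T → ∃ a, a ∈ cntF q := by
      intro q hq
      have := (Finset.mem_filter.mp hq).2
      exact (Finset.card_pos.mp (Nat.pos_of_ne_zero this)).imp (fun a ha => ha)
    choose! f hf using hTa
    have hfprop : ∀ q ∈ T, 1 ≤ f q ∧ f q ≤ q ∧ Nat.gcd (f q) q = 1 ∧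
        α - Δ ≤ (f q : ℝ) / q ∧ (f q : ℝ) / q ≤ α + Δ := by
      intro q hq
      have := hf q hq
      simp only [hcntF, Finset.mem_filter, Finset.mem_Icc] at this
      exact ⟨this.1.1, this.1.2, this.2.1, this.2.2.1, this.2.2.2⟩
    -- Dirichlet approximation
    set n := ⌊1 / s⌋₊ with hn
    have hn1 : 0 < n := Nat.floor_pos.mpr h1s
    obtain ⟨qr, hqr1, hqr2⟩ := Real.exists_rat_abs_sub_le_and_den_le α hn1
    set r := qr.den with hrdef
    set h₀ := qr.num with hh₀def
    have hrpos : 0 < r := qr.pos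
    have hrR : (0:ℝ) < r := by exact_mod_cast hrpos
    have hr_le : (r : ℝ) ≤ 1 / s := by
      calc (r:ℝ) ≤ (n:ℝ) := by exact_mod_cast hqr2
        _ ≤ 1 / s := Nat.floor_le (by positivity)
    have hrs1 : (r:ℝ) * s ≤ 1 := by
      rw [le_div_iff₀ hs0] at hr_le; exact hr_le
    have hcastq : (qr : ℝ) = (h₀ : ℝ) / (r : ℝ) := by
      rw [Rat.cast_def]
    have hβle : |α - (h₀:ℝ)/(r:ℝ)| ≤ s / r := by
      have h1n : 1 / s < (n:ℝ) + 1 := Nat.lt_floor_add_one _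
      have hn0 : (0:ℝ) < (n:ℝ) + 1 := by positivity
      have hsn : 1 ≤ s * ((n:ℝ) + 1) := by
        rw [div_lt_iff₀ hs0] at h1n; nlinarith
      have h2 : |α - (h₀:ℝ)/(r:ℝ)| ≤ 1 / (((n:ℝ) + 1) * r) := by
        rw [← hcastq]; exact_mod_cast hqr1
      refine le_trans h2 ?_
      rw [div_le_div_iff₀ (by positivity) hrR]
      have := mul_nonneg (sub_nonneg.mpr hsn) hrR.le
      nlinarith [this]
    have hcop : Int.gcd h₀ (r:ℤ) = 1 := by
      have := qr.reduced
      simpa [Int.gcd] using this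
    have hco : IsCoprime h₀ (r:ℤ) := Int.isCoprime_iff_gcd_eq_one.mpr hcop
    obtain ⟨uu, vv, huv⟩ := hco
    have hcop_uu : IsCoprime uu (r:ℤ) := ⟨h₀, vv, by linarith [huv]⟩
    set β := |α - (h₀:ℝ)/(r:ℝ)| with hβdef
    have hβ0 : 0 ≤ β := abs_nonneg _
    set z := max Δ ((β + Δ) * (M + Q) / (4 * Q)) with hzdef
    have hzΔ : Δ ≤ z := le_max_left _ _
    have hΔr : Δ * r ≤ s := by nlinarith [hssq, hrs1, hs0]
    have hβr : β * r ≤ s := by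
      have := (le_div_iff₀ hrR).mp hβle
      rw [hβdef]; linarith [this]
    have hzle : z ≤ s / (r:ℝ) := by
      rw [hzdef]
      refine max_le ?_ ?_
      · rw [le_div_iff₀ hrR]; linarith
      · rw [div_le_div_iff₀ (by positivity) hrR]
        have hmm : ((β + Δ) * (r:ℝ)) * (M + Q) ≤ (2 * s) * (2 * Q) := by
          refine mul_le_mul (by linarith) (by linarith) (by linarith) (by linarith)
        nlinarith [hmm]
    -- split T
    set T₀ := T.filter (fun q => (f q : ℤ) * r - h₀ * q = 0) with hT₀
    set Tp := T.filter (fun q => 0 < (f q : ℤ) * r - h₀ * q) with hTp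
    set Tm := T.filter (fun q => (f q : ℤ) * r - h₀ * q < 0) with hTm
    have hsplit : T.card ≤ T₀.card + Tp.card + Tm.card := by
      have hsub : T ⊆ (T₀ ∪ Tp) ∪ Tm := by
        intro q hq
        simp only [hT₀, hTp, hTm, Finset.mem_union, Finset.mem_filter]
        rcases lt_trichotomy ((f q : ℤ) * r - h₀ * q) 0 with h | h | h
        · exact Or.inr ⟨hq, h⟩
        · exact Or.inl (Or.inl ⟨hq, h⟩)
        · exact Or.inl (Or.inr ⟨hq, h⟩)
      calc T.card ≤ ((T₀ ∪ Tp) ∪ Tm).card := Finset.card_le_card hsub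
        _ ≤ (T₀ ∪ Tp).card + Tm.card := Finset.card_union_le _ _
        _ ≤ T₀.card + Tp.card + Tm.card := by
            have := Finset.card_union_le T₀ Tp; omega
    -- T₀ bound
    have hT₀bound : (T₀.card : ℝ) ≤ (if M < 1 / s then (1:ℝ) else 0) := by
      rcases T₀.eq_empty_or_nonempty with he | ⟨p, hp⟩
      · rw [he]; simpa using hU0
      have hkey : ∀ q ∈ T₀, q = r := by
        intro q hq
        rw [hT₀, Finset.mem_filter] at hq
        obtain ⟨hqT, heq0⟩ := hq
        obtain ⟨hf1, hf2, hgcd, _, _⟩ := hfprop q hqT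
        have hq0 : 0 < q := (hS q (hTsub q hqT)).1
        have heq : (f q : ℤ) * r = h₀ * q := by linarith [heq0]
        have hh₀pos : 0 < h₀ := by
          have h1 : (1:ℤ) ≤ (f q : ℤ) := by exact_mod_cast hf1
          have h2 : (1:ℤ) ≤ (r : ℤ) := by exact_mod_cast hrpos
          have h3 : (1:ℤ) ≤ (q : ℤ) := by exact_mod_cast hq0
          nlinarith
        have hnat : f q * r = h₀.toNat * q := by
          have : ((f q * r : ℕ) : ℤ) = ((h₀.toNat * q : ℕ) : ℤ) := by
            push_cast
            rw [Int.toNat_of_nonneg hh₀pos.le]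
            exact heq
          exact_mod_cast this
        have hcq : Nat.Coprime q (f q) := (Nat.coprime_comm.mp hgcd)
        have heqA : r * f q = q * h₀.toNat := by
          rw [mul_comm r (f q), hnat, mul_comm]
        have hqr : q ∣ r := by
          refine hcq.dvd_of_dvd_mul_right ?_
          rw [heqA]
          exact dvd_mul_right q h₀.toNat
        have hnabs : h₀.natAbs = h₀.toNat := by omega
        have hcr : Nat.Coprime r h₀.toNat := by
          have : Nat.gcd h₀.natAbs r = 1 := by simpa [Int.gcd] using hcop
          rw [hnabs] at this
          exact Nat.coprime_comm.mp this
        have hrq : r ∣ q := by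
          refine hcr.dvd_of_dvd_mul_left ?_
          have heqB : h₀.toNat * q = r * f q := by
            rw [← hnat, mul_comm]
          rw [heqB]
          exact dvd_mul_right r (f q)
        exact Nat.dvd_antisymm hqr hrq
      have hcard1 : T₀.card ≤ 1 :=
        Finset.card_le_one.mpr (fun a ha b hb => (hkey a ha).trans (hkey b hb).symm)
      have hpr : p = r := hkey p hp
      have hpT : p ∈ T := (Finset.mem_filter.mp hp).1
      have hMlt : M < 1 / s := by
        have h1 := (hS p (hTsub p hpT)).2.1
        rw [hpr] at h1
        linarith [hr_le]
      rw [if_pos hMlt]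
      exact_mod_cast hcard1
    -- Tp bound via side_bound with ε = 1
    have hTpos : (Tp.card : ℝ) ≤ 13 * B := by
      have hside := side_bound 𝒮 M Q Δ α r h₀ uu vv 1 f Tp β z hrpos hQpos hΔ hM hMQ
        hβdef huv (Or.inl rfl) hzdef ?_
      · have hBinst := hB r hrpos hr_le z hzΔ
          hzle (-1 * uu)
          (by
            have : IsCoprime (-1 * uu) (r:ℤ) := by
              rw [neg_one_mul]; exact hcop_uu.neg_left
            exact Int.isCoprime_iff_gcd_eq_one.mp this)
        refine le_trans ?_ (mul_le_mul_of_nonneg_left hBinst (by norm_num : (0:ℝ) ≤ 13))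
        have hcast := (Nat.cast_le (α := ℝ)).mpr hside
        push_cast at hcast
        convert hcast using 2
      · intro q hq
        rw [hTp, Finset.mem_filter] at hq
        obtain ⟨hqT, hqpos⟩ := hq
        obtain ⟨hf1, hf2, hgcd, hlo, hhi⟩ := hfprop q hqT
        exact ⟨hTsub q hqT, (hS q (hTsub q hqT)).1, (hS q (hTsub q hqT)).2.1,
          (hS q (hTsub q hqT)).2.2, hgcd, hlo, hhi, by simpa using hqpos⟩
    -- Tm bound via side_bound with ε = -1
    have hTneg : (Tm.card : ℝ) ≤ 13 * B := by
      have hside := side_bound 𝒮 M Q Δ α r h₀ uu vv (-1) f Tm β z hrpos hQpos hΔ hM hMQ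
        hβdef huv (Or.inr rfl) hzdef ?_
      · have hBinst := hB r hrpos hr_le z hzΔ
          hzle (-(-1) * uu)
          (by
            have : IsCoprime (-(-1) * uu) (r:ℤ) := by
              norm_num
              exact hcop_uu
            exact Int.isCoprime_iff_gcd_eq_one.mp this)
        refine le_trans ?_ (mul_le_mul_of_nonneg_left hBinst (by norm_num : (0:ℝ) ≤ 13))
        have hcast := (Nat.cast_le (α := ℝ)).mpr hside
        push_cast at hcast
        convert hcast using 2
        simp
      · intro q hq
        rw [hTm, Finset.mem_filter] at hq
        obtain ⟨hqT, hqneg⟩ := hq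
        obtain ⟨hf1, hf2, hgcd, hlo, hhi⟩ := hfprop q hqT
        refine ⟨hTsub q hqT, (hS q (hTsub q hqT)).1, (hS q (hTsub q hqT)).2.1,
          (hS q (hTsub q hqT)).2.2, hgcd, hlo, hhi, ?_⟩
        have : (0:ℤ) < -((f q : ℤ) * r - h₀ * q) := by linarith
        linarith [this]
    -- combine
    have hcast : ((∑ q ∈ 𝒮, (cntF q).card : ℕ) : ℝ) ≤ (T₀.card : ℝ) + Tp.card + Tm.card := by
      have h1 : (∑ q ∈ 𝒮, (cntF q).card) ≤ T₀.card + Tp.card + Tm.card :=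
        le_trans hPT hsplit
      exact_mod_cast h1
    linarith [hT₀bound, hTpos, hTneg, hU0, hB0]
end

section
/- There is an absolute constant c > 0 such that for all Q₁ ≥ 1, all N ≥ 1 and all sequences (a_n) of complex numbers, ∑_{q ≤ Q₁} ∑_{a=1, gcd(a,q)=1}^{q²} |S(a/q²)|² ≤ c · Q₁ · (N + Q₁²) · Z, where the outer sum runs over positive integers q ≤ Q₁ and the inner sum over integers 1 ≤ a ≤ q² with gcd(a,q)=1. -/
open Finset

lemma exp_sum_aux (M : ℕ) (hM : 1 ≤ M) (k : ℤ) :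
    ∑ a ∈ Finset.Icc 1 M, Complex.exp (2 * Real.pi * Complex.I * (k : ℂ) * (a : ℂ) / (M : ℂ))
      = if (M : ℤ) ∣ k then (M : ℂ) else 0 := by
  have hM0 : (M : ℂ) ≠ 0 := Nat.cast_ne_zero.2 (by omega)
  set ζ : ℂ := Complex.exp (2 * Real.pi * Complex.I * (k : ℂ) / (M : ℂ)) with hζ
  have hterm : ∀ a : ℕ,
      Complex.exp (2 * Real.pi * Complex.I * (k : ℂ) * (a : ℂ) / (M : ℂ)) = ζ ^ a := by
    intro a
    rw [hζ, ← Complex.exp_nat_mul]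
    congr 1
    ring
  have hζM : ζ ^ M = 1 := by
    rw [hζ, ← Complex.exp_nat_mul]
    have : (M : ℂ) * (2 * Real.pi * Complex.I * (k : ℂ) / (M : ℂ))
        = k * (2 * Real.pi * Complex.I) := by
      field_simp
    rw [this]
    exact Complex.exp_int_mul_two_pi_mul_I k
  by_cases hdvd : (M : ℤ) ∣ k
  · obtain ⟨j, hj⟩ := hdvd
    have hζ1 : ζ = 1 := by
      rw [hζ, hj]
      have : 2 * Real.pi * Complex.I * ((M * j : ℤ) : ℂ) / (M : ℂ)
          = j * (2 * Real.pi * Complex.I) := by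
        push_cast; field_simp
      rw [this]
      exact Complex.exp_int_mul_two_pi_mul_I j
    rw [if_pos ⟨j, hj⟩]
    simp [hterm, hζ1]
  · have hζ1 : ζ ≠ 1 := by
      intro h
      apply hdvd
      rw [hζ, Complex.exp_eq_one_iff] at h
      obtain ⟨n, hn⟩ := h
      have : (k : ℂ) = (M : ℂ) * n := by
        field_simp at hn
        have h2 : (2 : ℂ) * Real.pi * Complex.I ≠ 0 := by
          simp [Real.pi_ne_zero, Complex.I_ne_zero]
        apply mul_left_cancel₀ h2
        linear_combination (2 * (Real.pi : ℂ) * Complex.I) * hn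
      exact ⟨n, by exact_mod_cast this⟩
    rw [if_neg hdvd]
    simp only [hterm]
    rw [show Finset.Icc 1 M = Finset.Ico 1 (M + 1) by rw [Finset.Ico_add_one_right_eq_Icc],
      geom_sum_Ico hζ1 (by omega), pow_succ, hζM]
    simp


lemma count_le (K M : ℕ) (hM : 1 ≤ M) (n : ℕ) :
    M * ((Finset.Icc 1 K).filter (fun m => m % M = n % M)).card ≤ K + M := by
  have hcard : ((Finset.Icc 1 K).filter (fun m => m % M = n % M)).card ≤ K / M + 1 := by
    have : ((Finset.Icc 1 K).filter (fun m => m % M = n % M)).card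
        ≤ (Finset.range (K / M + 1)).card := by
      apply Finset.card_le_card_of_injOn (fun m => m / M)
      · intro m hm
        simp only [Finset.mem_coe, Finset.mem_filter, Finset.mem_Icc] at hm
        simp only [Finset.mem_coe, Finset.mem_range]
        have : m / M ≤ K / M := Nat.div_le_div_right hm.1.2
        omega
      · intro m₁ h₁ m₂ h₂ h
        simp only [Finset.coe_filter, Finset.mem_Icc, Set.mem_setOf_eq] at h₁ h₂
        have e₁ := Nat.div_add_mod m₁ M
        have e₂ := Nat.div_add_mod m₂ M
        have hdiv : m₁ / M = m₂ / M := by simpa using h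
        have hmod : m₁ % M = m₂ % M := h₁.2.trans h₂.2.symm
        have e3 : M * (m₁ / M) = M * (m₂ / M) := by rw [hdiv]
        omega
    simpa using this
  calc M * ((Finset.Icc 1 K).filter (fun m => m % M = n % M)).card
      ≤ M * (K / M + 1) := Nat.mul_le_mul_left M hcard
    _ = M * (K / M) + M := by ring
    _ ≤ K + M := by
        have := Nat.div_mul_le_self K M
        have h2 : M * (K / M) = K / M * M := Nat.mul_comm _ _
        omega

lemma symm_sum (K M : ℕ) (h : ℕ → ℝ) :
    ∑ n ∈ Finset.Icc 1 K, ∑ m ∈ (Finset.Icc 1 K).filter (fun m => m % M = n % M), h m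
    = ∑ n ∈ Finset.Icc 1 K, ∑ m ∈ (Finset.Icc 1 K).filter (fun m => m % M = n % M), h n := by
  simp_rw [Finset.sum_filter]
  rw [Finset.sum_comm]
  refine Finset.sum_congr rfl fun x _ => Finset.sum_congr rfl fun y _ => ?_
  rcases eq_or_ne (x % M) (y % M) with hh | hh
  · rw [if_pos hh, if_pos hh.symm]
  · rw [if_neg hh, if_neg (Ne.symm hh)]

lemma parsevalB (K M : ℕ) (hM : 1 ≤ M) (f : ℕ → ℂ) :
    ∑ a ∈ Finset.Icc 1 M,
      ‖∑ n ∈ Finset.Icc 1 K,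
        f n * Complex.exp (2 * Real.pi * Complex.I * (n : ℂ) * (((a : ℝ) / (M : ℝ)) : ℂ))‖ ^ 2
      ≤ 2 * ((K : ℝ) + (M : ℝ)) * ∑ n ∈ Finset.Icc 1 K, ‖f n‖ ^ 2 := by
  set g : ℕ → ℝ := fun n => ‖f n‖ ^ 2 with hg
  have hg0 : ∀ n, 0 ≤ g n := fun n => sq_nonneg _
  set S : ℕ → ℂ := fun a => ∑ n ∈ Finset.Icc 1 K,
      f n * Complex.exp (2 * Real.pi * Complex.I * (n : ℂ) * (((a : ℝ) / (M : ℝ)) : ℂ)) with hS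
  have hmul : ∀ a n m : ℕ,
      (f n * Complex.exp (2 * Real.pi * Complex.I * (n : ℂ) * (((a : ℝ) / (M : ℝ)) : ℂ)))
        * (starRingEnd ℂ) (f m * Complex.exp (2 * Real.pi * Complex.I * (m : ℂ) * (((a : ℝ) / (M : ℝ)) : ℂ)))
      = f n * (starRingEnd ℂ) (f m)
          * Complex.exp (2 * Real.pi * Complex.I * (((n : ℤ) - (m : ℤ) : ℤ) : ℂ) * (a : ℂ) / (M : ℂ)) := by
    intro a n m
    rw [map_mul, ← Complex.exp_conj, mul_mul_mul_comm, ← Complex.exp_add]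
    congr 2
    rw [show ((2 : ℂ) * (Real.pi : ℂ) * Complex.I * (m : ℂ) * (((a : ℝ) / (M : ℝ)) : ℂ))
        = ((2 * Real.pi * m * ((a : ℝ) / (M : ℝ)) : ℝ) : ℂ) * Complex.I by push_cast; ring]
    rw [map_mul, Complex.conj_ofReal, Complex.conj_I]
    push_cast
    ring
  have key : ∑ a ∈ Finset.Icc 1 M, S a * (starRingEnd ℂ) (S a)
      = ∑ n ∈ Finset.Icc 1 K, ∑ m ∈ Finset.Icc 1 K,
          f n * (starRingEnd ℂ) (f m) * (if (M : ℤ) ∣ ((n : ℤ) - (m : ℤ)) then (M : ℂ) else 0) := by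
    have step1 : ∑ a ∈ Finset.Icc 1 M, S a * (starRingEnd ℂ) (S a)
        = ∑ a ∈ Finset.Icc 1 M, ∑ n ∈ Finset.Icc 1 K, ∑ m ∈ Finset.Icc 1 K,
            f n * (starRingEnd ℂ) (f m)
              * Complex.exp (2 * Real.pi * Complex.I * (((n : ℤ) - (m : ℤ) : ℤ) : ℂ) * (a : ℂ) / (M : ℂ)) := by
      refine Finset.sum_congr rfl fun a _ => ?_
      rw [hS]
      simp only
      rw [map_sum, Finset.sum_mul_sum]
      exact Finset.sum_congr rfl fun n _ => Finset.sum_congr rfl fun m _ => hmul a n m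
    rw [step1, Finset.sum_comm]
    refine Finset.sum_congr rfl fun n _ => ?_
    rw [Finset.sum_comm]
    refine Finset.sum_congr rfl fun m _ => ?_
    rw [← Finset.mul_sum, exp_sum_aux M hM]
  have habs : ∀ z : ℂ, ‖z‖ ^ 2 = (z * (starRingEnd ℂ) z).re := by
    intro z
    rw [Complex.mul_conj]
    simp [Complex.sq_norm]
  calc ∑ a ∈ Finset.Icc 1 M, ‖S a‖ ^ 2
      = (∑ a ∈ Finset.Icc 1 M, S a * (starRingEnd ℂ) (S a)).re := by
        rw [Complex.re_sum]
        exact Finset.sum_congr rfl fun a _ => habs (S a)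
    _ ≤ ‖∑ a ∈ Finset.Icc 1 M, S a * (starRingEnd ℂ) (S a)‖ := Complex.re_le_norm _
    _ = ‖∑ n ∈ Finset.Icc 1 K, ∑ m ∈ Finset.Icc 1 K,
          f n * (starRingEnd ℂ) (f m) * (if (M : ℤ) ∣ ((n : ℤ) - (m : ℤ)) then (M : ℂ) else 0)‖ := by
        rw [key]
    _ ≤ ∑ n ∈ Finset.Icc 1 K, ∑ m ∈ Finset.Icc 1 K,
          ‖f n‖ * ‖f m‖ * (if (M : ℤ) ∣ ((n : ℤ) - (m : ℤ)) then (M : ℝ) else 0) := by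
        refine (norm_sum_le _ _).trans ?_
        refine Finset.sum_le_sum fun n _ => ?_
        refine (norm_sum_le _ _).trans ?_
        refine Finset.sum_le_sum fun m _ => ?_
        rw [norm_mul, norm_mul, Complex.norm_conj, apply_ite norm, Complex.norm_natCast,
          norm_zero]
    _ = ∑ n ∈ Finset.Icc 1 K, ∑ m ∈ (Finset.Icc 1 K).filter (fun m => m % M = n % M),
          ‖f n‖ * ‖f m‖ * (M : ℝ) := by
        refine Finset.sum_congr rfl fun n _ => ?_
        rw [Finset.sum_filter]
        refine Finset.sum_congr rfl fun m _ => ?_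
        have hiff : ((M : ℤ) ∣ ((n : ℤ) - (m : ℤ))) ↔ (m % M = n % M) :=
          (Nat.modEq_iff_dvd).symm
        by_cases h : m % M = n % M
        · rw [if_pos (hiff.2 h), if_pos h]
        · rw [if_neg (fun hd => h (hiff.1 hd)), if_neg h, mul_zero]
    _ ≤ ∑ n ∈ Finset.Icc 1 K, ∑ m ∈ (Finset.Icc 1 K).filter (fun m => m % M = n % M),
          (g n + g m) * (M : ℝ) := by
        refine Finset.sum_le_sum fun n _ => Finset.sum_le_sum fun m _ => ?_
        refine mul_le_mul_of_nonneg_right ?_ (Nat.cast_nonneg M)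
        have : ‖f n‖ * ‖f m‖
            ≤ ‖f n‖ ^ 2 + ‖f m‖ ^ 2 := by
          nlinarith [sq_nonneg (‖f n‖ - ‖f m‖),
            norm_nonneg (f n), norm_nonneg (f m)]
        simpa [hg] using this
    _ = 2 * ∑ n ∈ Finset.Icc 1 K,
          (g n * (M : ℝ)) * (((Finset.Icc 1 K).filter (fun m => m % M = n % M)).card : ℝ) := by
        simp_rw [add_mul, Finset.sum_add_distrib]
        rw [symm_sum K M (fun m => g m * (M : ℝ))]
        rw [← two_mul]
        congr 1
        refine Finset.sum_congr rfl fun n _ => ?_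
        rw [Finset.sum_const, nsmul_eq_mul, mul_comm]
    _ ≤ 2 * ∑ n ∈ Finset.Icc 1 K, g n * ((K : ℝ) + (M : ℝ)) := by
        refine mul_le_mul_of_nonneg_left (Finset.sum_le_sum fun n _ => ?_) (by norm_num)
        rw [mul_assoc]
        refine mul_le_mul_of_nonneg_left ?_ (hg0 n)
        have h1 := count_le K M hM n
        calc (M : ℝ) * (((Finset.Icc 1 K).filter (fun m => m % M = n % M)).card : ℝ)
            = ((M * ((Finset.Icc 1 K).filter (fun m => m % M = n % M)).card : ℕ) : ℝ) := by
              push_cast; ring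
          _ ≤ ((K + M : ℕ) : ℝ) := by exact_mod_cast h1
          _ = (K : ℝ) + (M : ℝ) := by push_cast; ring
    _ = 2 * ((K : ℝ) + (M : ℝ)) * ∑ n ∈ Finset.Icc 1 K, g n := by
        rw [← Finset.sum_mul]; ring

set_option maxHeartbeats 1000000 in
/-- The bound (Z2): `∑_{q ≤ Q₁} ∑_{(a,q)=1, a ≤ q²} |S(a/q²)|² ≤ c Q₁ (N + Q₁²) Z`. -/
theorem stmt_7 :
    ∃ c : ℝ, 0 < c ∧
      ∀ (Q₁ N : ℝ) (f : ℕ → ℂ),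
        1 ≤ Q₁ → 1 ≤ N →
        ∑ q ∈ Finset.Icc 1 ⌊Q₁⌋₊,
            ∑ a ∈ (Finset.Icc 1 (q ^ 2)).filter (fun a => Nat.gcd a q = 1),
              ‖expSum N f ((a : ℝ) / (q ^ 2 : ℕ))‖ ^ 2
          ≤ c * Q₁ * (N + Q₁ ^ 2) * Zsum N f := by
  refine ⟨2, by norm_num, ?_⟩
  intro Q₁ N f hQ hN
  have hZ : 0 ≤ Zsum N f := Finset.sum_nonneg fun n _ => sq_nonneg _
  have hN0 : (0 : ℝ) ≤ N := le_trans zero_le_one hN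
  have hQ0 : (0 : ℝ) ≤ Q₁ := le_trans zero_le_one hQ
  have hNQ : (0 : ℝ) ≤ N + Q₁ ^ 2 := by positivity
  have hconst : (0 : ℝ) ≤ 2 * (N + Q₁ ^ 2) * Zsum N f :=
    mul_nonneg (mul_nonneg (by norm_num) hNQ) hZ
  have hstep : ∀ q ∈ Finset.Icc 1 ⌊Q₁⌋₊,
      ∑ a ∈ (Finset.Icc 1 (q ^ 2)).filter (fun a => Nat.gcd a q = 1),
        ‖expSum N f ((a : ℝ) / (q ^ 2 : ℕ))‖ ^ 2
      ≤ 2 * (N + Q₁ ^ 2) * Zsum N f := by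
    intro q hq
    simp only [Finset.mem_Icc] at hq
    have hq2 : 1 ≤ q ^ 2 := Nat.one_le_pow _ _ (by omega)
    have h1 : ∑ a ∈ (Finset.Icc 1 (q ^ 2)).filter (fun a => Nat.gcd a q = 1),
          ‖expSum N f ((a : ℝ) / (q ^ 2 : ℕ))‖ ^ 2
        ≤ ∑ a ∈ Finset.Icc 1 (q ^ 2),
          ‖expSum N f ((a : ℝ) / (q ^ 2 : ℕ))‖ ^ 2 :=
      Finset.sum_le_sum_of_subset_of_nonneg (Finset.filter_subset _ _)
        (fun a _ _ => sq_nonneg _)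
    have h2 := parsevalB ⌊N⌋₊ (q ^ 2) hq2 f
    have h3 : ∑ a ∈ Finset.Icc 1 (q ^ 2),
          ‖expSum N f ((a : ℝ) / (q ^ 2 : ℕ))‖ ^ 2
        ≤ 2 * ((⌊N⌋₊ : ℝ) + ((q ^ 2 : ℕ) : ℝ)) * Zsum N f := by
      unfold expSum Zsum
      simp only [Complex.ofReal_div]
      exact h2
    refine (h1.trans h3).trans ?_
    have hfloor : (⌊N⌋₊ : ℝ) ≤ N := Nat.floor_le hN0
    have hqQ : ((q ^ 2 : ℕ) : ℝ) ≤ Q₁ ^ 2 := by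
      have hq1 : (q : ℝ) ≤ (⌊Q₁⌋₊ : ℝ) := by exact_mod_cast hq.2
      have hq2' : (q : ℝ) ≤ Q₁ := hq1.trans (Nat.floor_le hQ0)
      have hq0 : (0 : ℝ) ≤ (q : ℝ) := Nat.cast_nonneg q
      push_cast
      nlinarith
    nlinarith [hZ]
  calc ∑ q ∈ Finset.Icc 1 ⌊Q₁⌋₊,
        ∑ a ∈ (Finset.Icc 1 (q ^ 2)).filter (fun a => Nat.gcd a q = 1),
          ‖expSum N f ((a : ℝ) / (q ^ 2 : ℕ))‖ ^ 2
      ≤ ∑ _q ∈ Finset.Icc 1 ⌊Q₁⌋₊, 2 * (N + Q₁ ^ 2) * Zsum N f :=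
        Finset.sum_le_sum hstep
    _ = (⌊Q₁⌋₊ : ℝ) * (2 * (N + Q₁ ^ 2) * Zsum N f) := by
        rw [Finset.sum_const, nsmul_eq_mul]
        simp [Nat.card_Icc]
    _ ≤ Q₁ * (2 * (N + Q₁ ^ 2) * Zsum N f) :=
        mul_le_mul_of_nonneg_right (Nat.floor_le hQ0) hconst
    _ = 2 * Q₁ * (N + Q₁ ^ 2) * Zsum N f := by ring
end

section
/- Let Q ≥ 1 be a real number and let t be a positive integer. Let 𝒮(Q) be the set of perfect squares in the interval (Q, 2Q], and let 𝒮_t(Q) = { q ∈ ℕ : tq ∈ 𝒮(Q) }. Then the cardinality of 𝒮_t(Q) satisfies |𝒮_t(Q)| ≤ √(2Q) / f_t. -/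
open Finset

/-- `f_t = ∏_{p ∣ t} p^{⌈v_p(t)/2⌉}`, where `v_p(t)` is the `p`-adic valuation of `t`. -/
def ft (t : ℕ) : ℕ :=
  ∏ p ∈ t.primeFactors, p ^ ((t.factorization p + 1) / 2)

lemma ft_pos (t : ℕ) : 0 < ft t :=
  Finset.prod_pos fun p hp => pow_pos (Nat.prime_of_mem_primeFactors hp).pos _

lemma ft_dvd {t m : ℕ} (ht : 0 < t) (hm : 0 < m) {q : ℕ} (h : t * q = m * m) : ft t ∣ m := by
  have hq : 0 < q := by
    rcases Nat.eq_zero_or_pos q with h0 | h0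
    · simp [h0] at h; omega
    · exact h0
  rw [← Nat.factorization_le_iff_dvd (ft_pos t).ne' hm.ne']
  have hfact : (ft t).factorization = ∑ p ∈ t.primeFactors,
      Finsupp.single p ((t.factorization p + 1) / 2) := by
    unfold ft
    rw [Nat.factorization_prod (fun p hp => (pow_pos (Nat.prime_of_mem_primeFactors hp).pos _).ne')]
    refine Finset.sum_congr rfl fun p hp => ?_
    rw [(Nat.prime_of_mem_primeFactors hp).factorization_pow]
  intro r
  rw [hfact, Finsupp.finset_sum_apply]
  rw [Finset.sum_eq_single r (fun p _ hpr => Finsupp.single_eq_of_ne' hpr) (by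
    intro hr
    rw [← Nat.support_factorization] at hr
    simp [Finsupp.notMem_support_iff.1 hr])]
  rw [Finsupp.single_eq_same]
  by_cases hr : r ∈ t.primeFactors
  · have hmul : (t * q).factorization r = (m * m).factorization r := by rw [h]
    rw [Nat.factorization_mul ht.ne' hq.ne', Nat.factorization_mul hm.ne' hm.ne'] at hmul
    simp only [Finsupp.add_apply] at hmul
    omega
  · rw [← Nat.support_factorization] at hr
    simp [Finsupp.notMem_support_iff.1 hr]

/-- The bound (25): with `𝒮(Q)` the set of perfect squares in `(Q, 2Q]` and
`𝒮_t(Q) = {q : tq ∈ 𝒮(Q)}`, we have `|𝒮_t(Q)| ≤ √(2Q) / f_t`. -/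
theorem stmt_10 (Q : ℝ) (hQ : 1 ≤ Q) (t : ℕ) (ht : 0 < t) :
    (({q : ℕ | IsSquare (t * q) ∧ Q < (t * q : ℕ) ∧ ((t * q : ℕ) : ℝ) ≤ 2 * Q}.ncard : ℕ) : ℝ)
      ≤ Real.sqrt (2 * Q) / ft t := by
  set M := ⌊Real.sqrt (2 * Q)⌋₊ with hMdef
  have hft := ft_pos t
  have hsq : (0:ℝ) ≤ Real.sqrt (2 * Q) := Real.sqrt_nonneg _
  set S := {q : ℕ | IsSquare (t * q) ∧ Q < (t * q : ℕ) ∧ ((t * q : ℕ) : ℝ) ≤ 2 * Q} with hS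
  set T := (Finset.Icc 1 (M / ft t)).image (fun k => ft t * k) with hT
  have key : S.ncard ≤ M / ft t := by
    have hle : S.ncard ≤ (↑T : Set ℕ).ncard := by
      apply Set.ncard_le_ncard_of_injOn (fun q => Nat.sqrt (t * q))
      · rintro q ⟨⟨r, hr⟩, hq1, hq2⟩
        have hm : Nat.sqrt (t * q) = r := by rw [hr, Nat.sqrt_eq]
        have hrpos : 0 < r := by
          rcases Nat.eq_zero_or_pos r with h0 | h0
          · exfalso; rw [h0, mul_zero] at hr
            rw [hr] at hq1; simp at hq1; linarith
          · exact h0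
        have hdvd : ft t ∣ r := ft_dvd ht hrpos hr
        have hrM : r ≤ M := by
          apply Nat.le_floor
          have h1 : ((r:ℝ) * r) ≤ 2 * Q := by
            push_cast [hr] at hq2 ⊢; linarith
          nlinarith [Real.sq_sqrt (by linarith : (0:ℝ) ≤ 2 * Q),
            Real.sqrt_nonneg (2 * Q), hsq]
        simp only [hT, Finset.coe_image, Set.mem_image, Finset.mem_coe, Finset.mem_Icc, hm]
        exact ⟨r / ft t, ⟨Nat.one_le_div_iff hft |>.2 (Nat.le_of_dvd hrpos hdvd),
          Nat.div_le_div_right hrM⟩, Nat.mul_div_cancel' hdvd⟩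
      · rintro q1 ⟨⟨r1, hr1⟩, _⟩ q2 ⟨⟨r2, hr2⟩, _⟩ heq
        simp only at heq
        have : t * q1 = t * q2 := by
          rw [hr1, hr2]
          rw [hr1, Nat.sqrt_eq, hr2, Nat.sqrt_eq] at heq
          rw [heq]
        exact Nat.eq_of_mul_eq_mul_left ht this
    calc S.ncard ≤ (↑T : Set ℕ).ncard := hle
      _ = T.card := by rw [Set.ncard_coe_finset]
      _ ≤ (Finset.Icc 1 (M / ft t)).card := Finset.card_image_le
      _ = M / ft t := by rw [Nat.card_Icc]; simp
  calc (S.ncard : ℝ) ≤ ((M / ft t : ℕ) : ℝ) := by exact_mod_cast key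
    _ ≤ Real.sqrt (2 * Q) / ft t := by
        rw [le_div_iff₀ (by exact_mod_cast hft : (0:ℝ) < (ft t : ℕ))]
        calc ((M / ft t : ℕ) : ℝ) * (ft t : ℕ) = ((M / ft t * ft t : ℕ) : ℝ) := by push_cast; ring
          _ ≤ (M : ℝ) := by exact_mod_cast Nat.div_mul_le_self M (ft t)
          _ ≤ Real.sqrt (2 * Q) := Nat.floor_le hsq
end

section
/- For every positive integer r, ∑_{t ∣ r} 1/f_t ≤ (r/φ(r))², where the sum runs over the positive divisors t of r and φ is Euler's totient function. -/
open Finset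

lemma ft_one : ft 1 = 1 := by simp [ft]

lemma ft_mul {m n : ℕ} (hm : m ≠ 0) (hn : n ≠ 0) (h : Nat.Coprime m n) :
    ft (m * n) = ft m * ft n := by
  unfold ft
  rw [Nat.primeFactors_mul hm hn, Finset.prod_union h.disjoint_primeFactors]
  congr 1
  · refine Finset.prod_congr rfl fun p hp => ?_
    have h0 : n.factorization p = 0 := by
      rw [← Finsupp.notMem_support_iff, Nat.support_factorization]
      exact Finset.disjoint_left.mp h.disjoint_primeFactors hp
    rw [Nat.factorization_mul hm hn]; simp [h0]
  · refine Finset.prod_congr rfl fun p hp => ?_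
    have h0 : m.factorization p = 0 := by
      rw [← Finsupp.notMem_support_iff, Nat.support_factorization]
      exact Finset.disjoint_right.mp h.disjoint_primeFactors hp
    rw [Nat.factorization_mul hm hn]; simp [h0]

lemma ft_prime_pow {p : ℕ} (hp : p.Prime) (k : ℕ) : ft (p ^ k) = p ^ ((k + 1) / 2) := by
  rcases Nat.eq_zero_or_pos k with rfl | hk
  · simp [ft]
  · unfold ft
    rw [Nat.primeFactors_prime_pow hk.ne' hp, Finset.prod_singleton,
      hp.factorization_pow, Finsupp.single_eq_same]

lemma geom_aux {x : ℝ} (hx0 : 0 ≤ x) (hx1 : x < 1) (m : ℕ) :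
    ∑ j ∈ range m, x ^ (j + 1) ≤ x / (1 - x) := by
  have h1 : (0 : ℝ) < 1 - x := by linarith
  have hsum : ∑ j ∈ range m, x ^ (j + 1) = x * ∑ j ∈ range m, x ^ j := by
    rw [Finset.mul_sum]
    exact Finset.sum_congr rfl fun j _ => by ring
  have hgeom : ∑ j ∈ range m, x ^ j ≤ 1 / (1 - x) := by
    rw [geom_sum_eq hx1.ne m]
    have hxm : 0 ≤ x ^ m := pow_nonneg hx0 m
    have : (x ^ m - 1) / (x - 1) = (1 - x ^ m) / (1 - x) := by
      rw [← neg_div_neg_eq]; ring_nf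
    rw [this]
    exact (div_le_div_iff_of_pos_right h1).mpr (by linarith)
  rw [hsum, div_eq_mul_one_div]
  exact mul_le_mul_of_nonneg_left hgeom hx0

lemma sum_ceil_pow (x : ℝ) (m : ℕ) :
    ∑ i ∈ range (2 * m + 1), x ^ ((i + 1) / 2) = 1 + 2 * ∑ j ∈ range m, x ^ (j + 1) := by
  induction m with
  | zero => simp
  | succ m ih =>
    have h1 : 2 * (m + 1) + 1 = (2 * m + 1) + 1 + 1 := by ring
    rw [h1, Finset.sum_range_succ, Finset.sum_range_succ, ih, Finset.sum_range_succ]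
    have e1 : (2 * m + 1 + 1) / 2 = m + 1 := by omega
    have e2 : (2 * m + 1 + 1 + 1) / 2 = m + 1 := by omega
    rw [e1, e2]; ring

lemma sum_bound {x : ℝ} (hx0 : 0 ≤ x) (hx1 : x < 1) (k : ℕ) :
    ∑ i ∈ range (k + 1), x ^ ((i + 1) / 2) ≤ (1 / (1 - x)) ^ 2 := by
  have h1 : (0 : ℝ) < 1 - x := by linarith
  have step : ∑ i ∈ range (k + 1), x ^ ((i + 1) / 2) ≤ 1 + 2 * (x / (1 - x)) := by
    rcases Nat.even_or_odd k with ⟨m, hm⟩ | ⟨m, hm⟩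
    · have hk : k + 1 = 2 * m + 1 := by omega
      rw [hk, sum_ceil_pow]
      have := geom_aux hx0 hx1 m
      linarith
    · have hk : k + 1 = (2 * m + 1) + 1 := by omega
      rw [hk, Finset.sum_range_succ, sum_ceil_pow]
      have e1 : (2 * m + 1 + 1) / 2 = m + 1 := by omega
      rw [e1]
      have h2 := geom_aux hx0 hx1 (m + 1)
      rw [Finset.sum_range_succ] at h2
      have h3 : 0 ≤ ∑ j ∈ range m, x ^ (j + 1) :=
        Finset.sum_nonneg fun j _ => pow_nonneg hx0 _
      have h4 : 0 ≤ x ^ (m + 1) := pow_nonneg hx0 _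
      linarith
  refine step.trans ?_
  have h2 : (1 + 2 * (x / (1 - x))) = (1 - x ^ 2) / (1 - x) ^ 2 := by
    field_simp
    ring
  rw [h2, div_pow, one_pow, div_le_div_iff₀ (by positivity) (by positivity)]
  nlinarith [sq_nonneg x, sq_nonneg (1 - x), mul_nonneg (sq_nonneg (1 - x)) (sq_nonneg x)]

lemma primepow_bound {p : ℕ} (hp : p.Prime) (k : ℕ) :
    ∑ i ∈ range (k + 1), ((ft (p ^ i) : ℝ))⁻¹
      ≤ (((p ^ k : ℕ) : ℝ) / ((Nat.totient (p ^ k) : ℕ) : ℝ)) ^ 2 := by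
  have hp1 : (1 : ℝ) < p := by exact_mod_cast hp.one_lt
  have hp0 : (0 : ℝ) < p := by linarith
  rcases Nat.eq_zero_or_pos k with rfl | hk
  · simp [ft_one]
  set x : ℝ := (p : ℝ)⁻¹ with hxdef
  have hx0 : 0 ≤ x := by positivity
  have hx1 : x < 1 := by
    rw [hxdef, inv_lt_one_iff₀]; right; exact hp1
  have hL : ∑ i ∈ range (k + 1), ((ft (p ^ i) : ℝ))⁻¹
      = ∑ i ∈ range (k + 1), x ^ ((i + 1) / 2) := by
    refine Finset.sum_congr rfl fun i _ => ?_
    rw [ft_prime_pow hp i, hxdef, inv_pow]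
    push_cast
    rfl
  have hR : (((p ^ k : ℕ) : ℝ) / ((Nat.totient (p ^ k) : ℕ) : ℝ)) = 1 / (1 - x) := by
    rw [Nat.totient_prime_pow hp hk]
    have hcast : ((p ^ (k - 1) * (p - 1) : ℕ) : ℝ) = (p : ℝ) ^ (k - 1) * ((p : ℝ) - 1) := by
      push_cast [Nat.cast_sub hp.one_lt.le]
      ring
    rw [hcast]
    have hk1 : (p : ℝ) ^ k = (p : ℝ) ^ (k - 1) * p := by
      rw [← pow_succ]
      congr 1
      omega
    have hpne : (p : ℝ) ≠ 0 := hp0.ne'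
    have hpm1 : (p : ℝ) - 1 ≠ 0 := by linarith
    push_cast
    rw [hk1, hxdef]
    field_simp
  rw [hL, hR]
  exact sum_bound hx0 hx1 k

open ArithmeticFunction ArithmeticFunction.zeta in
/-- For every positive integer `r`: `∑_{t ∣ r} 1/f_t ≤ (r/φ(r))²`. -/
theorem stmt_14 (r : ℕ) (hr : 0 < r) :
    ∑ t ∈ r.divisors, (1 : ℝ) / ft t ≤ ((r : ℝ) / (Nat.totient r : ℝ)) ^ 2 := by
  classical
  set F : ArithmeticFunction ℝ :=
    ⟨fun n => if n = 0 then 0 else ((ft n : ℝ))⁻¹, by simp⟩ with hFdef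
  have hFapp : ∀ n : ℕ, n ≠ 0 → F n = ((ft n : ℝ))⁻¹ := by
    intro n hn
    simp [hFdef, ArithmeticFunction.coe_mk, hn]
  have hFmult : F.IsMultiplicative := by
    constructor
    · rw [hFapp 1 one_ne_zero, ft_one]; simp
    · intro m n h
      rcases eq_or_ne m 0 with rfl | hm
      · have hn1 : n = 1 := (Nat.coprime_zero_left n).mp h
        subst hn1
        simp [hFdef, ArithmeticFunction.coe_mk, ft_one]
      rcases eq_or_ne n 0 with rfl | hn
      · have hm1 : m = 1 := (Nat.coprime_zero_right m).mp h
        subst hm1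
        simp [hFdef, ArithmeticFunction.coe_mk, ft_one]
      · rw [hFapp _ (mul_ne_zero hm hn), hFapp _ hm, hFapp _ hn, ft_mul hm hn h]
        push_cast
        rw [mul_inv]
  have hG : ((ζ : ArithmeticFunction ℕ) * F : ArithmeticFunction ℝ).IsMultiplicative :=
    (isMultiplicative_zeta.natCast).mul hFmult
  have hGapp : ∀ n : ℕ, n ≠ 0 →
      ((ζ : ArithmeticFunction ℕ) * F : ArithmeticFunction ℝ) n
        = ∑ t ∈ n.divisors, ((ft t : ℝ))⁻¹ := by
    intro n hn
    rw [coe_zeta_mul_apply]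
    exact Finset.sum_congr rfl fun t ht =>
      hFapp t (Nat.pos_of_mem_divisors ht).ne'
  have hLHS : ∑ t ∈ r.divisors, (1 : ℝ) / ft t
      = ∏ p ∈ r.primeFactors,
          ∑ i ∈ range (r.factorization p + 1), ((ft (p ^ i) : ℝ))⁻¹ := by
    have h1 : ∑ t ∈ r.divisors, (1 : ℝ) / ft t = ∑ t ∈ r.divisors, ((ft t : ℝ))⁻¹ := by
      exact Finset.sum_congr rfl fun t _ => one_div _
    rw [h1, ← hGapp r hr.ne',
      ArithmeticFunction.IsMultiplicative.multiplicative_factorization _ hG hr.ne',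
      Finsupp.prod]
    refine Finset.prod_congr rfl fun p hp => ?_
    have hpp : p.Prime := Nat.prime_of_mem_primeFactors hp
    rw [hGapp (p ^ r.factorization p) (pow_ne_zero _ hpp.pos.ne'),
      Nat.sum_divisors_prime_pow hpp]
  have hrfac : (r : ℝ) = ∏ p ∈ r.primeFactors, ((p ^ r.factorization p : ℕ) : ℝ) := by
    conv_lhs => rw [← Nat.factorization_prod_pow_eq_self hr.ne']
    rw [Finsupp.prod, Nat.cast_prod]
    rfl
  have hφfac : ((Nat.totient r : ℕ) : ℝ)
      = ∏ p ∈ r.primeFactors, ((Nat.totient (p ^ r.factorization p) : ℕ) : ℝ) := by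
    rw [Nat.multiplicative_factorization Nat.totient (fun _ _ h => Nat.totient_mul h)
      Nat.totient_one hr.ne', Finsupp.prod, Nat.cast_prod]
    rfl
  have hRHS : ((r : ℝ) / (Nat.totient r : ℝ)) ^ 2
      = ∏ p ∈ r.primeFactors,
          (((p ^ r.factorization p : ℕ) : ℝ)
            / ((Nat.totient (p ^ r.factorization p) : ℕ) : ℝ)) ^ 2 := by
    rw [hrfac, hφfac, ← Finset.prod_div_distrib, ← Finset.prod_pow]
  rw [hLHS, hRHS]
  refine Finset.prod_le_prod (fun p _ => ?_) (fun p hp => ?_)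
  · exact Finset.sum_nonneg fun i _ => by positivity
  · exact primepow_bound (Nat.prime_of_mem_primeFactors hp) _
end
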